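/- arXiv:2501.07023 — 3 statements merged into one kernel-verified Lean document; each statement's English description precedes it below -/
import Mathlib

section
/- Let T be a pruned tree of sequences and ξ a free inductive probability measure on T (⨅_{n ∈ ℕ} ξ(x↾n) = 0 for every x ∈ lim T), let λ^ξ be the unique Borel probability measure on lim T with λ^ξ([t]) = ξ(t) for all t ∈ T, and define f_ξ : lim T → [0,1] by f_ξ(x) := ⨆_{n ∈ ℕ} a_{x↾n}. Then for every set B ⊆ [0,1]: B is a Borel subset of [0,1] if and only if f_ξ⁻¹(B) is a Borel subset of lim T; and in that case λ^ξ(f_ξ⁻¹(B)) equals the Lebesgue measure of B. -/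
open scoped ENNReal
open MeasureTheory

noncomputable section

/-- A tree of sequences: a nonempty set of finite lists of naturals closed under prefixes. -/
def IsTree (T : Set (List ℕ)) : Prop :=
  T.Nonempty ∧ ∀ s t : List ℕ, s <+: t → t ∈ T → s ∈ T

/-- `t` is a maximal node of `T`: it has no successor in `T`. -/
def IsMaxNode (T : Set (List ℕ)) (t : List ℕ) : Prop :=
  ∀ k : ℕ, t ++ [k] ∉ T

/-- A probability tree on `T`. -/
def IsProbTree (T : Set (List ℕ)) (p : List ℕ → ℕ → ℝ≥0∞) : Prop :=
  ∀ t ∈ T, ¬ IsMaxNode T t →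
    (∀ k : ℕ, t ++ [k] ∉ T → p t k = 0) ∧ (∑' k : ℕ, p t k = 1)

/-- The measure induced by a probability tree: `Ξ_p(t) = ∏_{i<|t|} p (t↾i) (t i)`. -/
def Xi (p : List ℕ → ℕ → ℝ≥0∞) (t : List ℕ) : ℝ≥0∞ :=
  ∏ i ∈ Finset.range t.length, p (t.take i) (t.getD i 0)

/-- An inductive probability measure on `T`. -/
def IsIPM (T : Set (List ℕ)) (ξ : List ℕ → ℝ≥0∞) : Prop :=
  ξ [] = 1 ∧ ∀ t ∈ T, ¬ IsMaxNode T t →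
    ξ t = ∑' k : {k : ℕ // t ++ [k] ∈ T}, ξ (t ++ [k.1])

/-- The set of infinite branches of `T`. -/
def limT (T : Set (List ℕ)) : Set (ℕ → ℕ) :=
  {x | ∀ n : ℕ, (List.range n).map x ∈ T}

/-- `T` is pruned: every node has a successor in `T`. -/
def Pruned (T : Set (List ℕ)) : Prop := ∀ t ∈ T, ∃ k : ℕ, t ++ [k] ∈ T

/-- The basic clopen set `[t]` of branches through `t`. -/
def cyl (T : Set (List ℕ)) (t : List ℕ) : Set ↥(limT T) :=
  {x | (List.range t.length).map x.1 = t}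

/-- `ξ` is free: all branches have measure (infimum) zero. -/
def FreeIPM (T : Set (List ℕ)) (ξ : List ℕ → ℝ≥0∞) : Prop :=
  ∀ x ∈ limT T, (⨅ n : ℕ, ξ ((List.range n).map x)) = 0

/-- Lexicographic order for lists (of equal length): they first differ at some
index `i < |s|` where `s` is smaller. -/
def lexLt (s t : List ℕ) : Prop :=
  ∃ i : ℕ, i < s.length ∧ s.take i = t.take i ∧ s.getD i 0 < t.getD i 0

/-- The left endpoint `a_t` of the interval associated to `t`. -/
def aT (T : Set (List ℕ)) (ξ : List ℕ → ℝ≥0∞) (t : List ℕ) : ℝ :=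
  (∑' s : {s : List ℕ // s ∈ T ∧ s.length = t.length ∧ lexLt s t}, ξ s.1).toReal

/-- The right endpoint `b_t = a_t + ξ(t)`. -/
def bT (T : Set (List ℕ)) (ξ : List ℕ → ℝ≥0∞) (t : List ℕ) : ℝ :=
  aT T ξ t + (ξ t).toReal

/-- The set of endpoints `Q_ξ`. -/
def Qxi (T : Set (List ℕ)) (ξ : List ℕ → ℝ≥0∞) : Set ℝ :=
  {y | ∃ t ∈ T, y = aT T ξ t} ∪ {y | ∃ t ∈ T, y = bT T ξ t}

/-- The map `f_ξ : lim T → [0,1]`, `x ↦ sup_n a_{x↾n}`. -/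
def fXi (T : Set (List ℕ)) (ξ : List ℕ → ℝ≥0∞) (x : ↥(limT T)) : ℝ :=
  ⨆ n : ℕ, aT T ξ ((List.range n).map x.1)

namespace Aux
/-- take-prefix congruence -/
lemma take_eq_of_take_eq {l l' : List ℕ} {i j : ℕ} (hij : i ≤ j)
    (h : l.take j = l'.take j) : l.take i = l'.take i := by
  have : List.take i (List.take j l) = List.take i (List.take j l') := by rw [h]
  simpa [List.take_take, Nat.min_eq_left hij] using this

lemma getD_eq_of_take_eq {l l' : List ℕ} {i j : ℕ} (hij : i < j)
    (h : l.take j = l'.take j) : l.getD i 0 = l'.getD i 0 := by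
  have : (l.take j).getD i 0 = (l'.take j).getD i 0 := by rw [h]
  simpa [List.getD, List.getElem?_take, hij] using this


section
variable {u t s : List ℕ} {k j n i : ℕ}

lemma take_app (h : u.length = n) : (u ++ [k]).take n = u := by
  subst h; exact List.take_left

lemma take_app_le (h : u.length = n) (hi : i ≤ n) : (u ++ [k]).take i = u.take i :=
  List.take_append_of_le_length (by omega)

lemma getD_app (h : u.length = n) : (u ++ [k]).getD n 0 = k := by
  subst h
  simp [List.getD, List.getElem?_append_right (le_refl u.length)]

lemma getD_app_lt (h : u.length = n) (hi : i < n) : (u ++ [k]).getD i 0 = u.getD i 0 := by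
  simp [List.getD, List.getElem?_append_left (by omega : i < u.length)]

lemma eq_take_concat (h : s.length = n + 1) : s.take n ++ [s.getD n 0] = s := by
  have hn : n < s.length := by omega
  have := List.take_concat_get hn
  rw [List.concat_eq_append] at this
  rw [List.getD_eq_getElem s 0 hn, this]
  exact List.take_of_length_le (by omega)

lemma lexLt_ne (h : lexLt s t) : s ≠ t := by
  obtain ⟨i, hi, -, hlt⟩ := h
  intro he; subst he; omega

lemma lexLt_app_iff (hu : u.length = n) (ht : t.length = n) :
    lexLt (u ++ [j]) (t ++ [k]) ↔ lexLt u t ∨ (u = t ∧ j < k) := by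
  constructor
  · rintro ⟨i, hi, htake, hlt⟩
    have hi2 : i < n + 1 := by simp [hu] at hi; omega
    clear hi
    rcases lt_or_ge i n with hin | hin
    · left
      refine ⟨i, ?_, ?_, ?_⟩
      · omega
      · rwa [take_app_le hu (le_of_lt hin), take_app_le ht (le_of_lt hin)] at htake
      · rwa [getD_app_lt hu hin, getD_app_lt ht hin] at hlt
    · have hieq : i = n := by omega
      subst hieq
      right
      constructor
      · rw [take_app hu, take_app ht] at htake; exact htake
      · rwa [getD_app hu, getD_app ht] at hlt
  · rintro (⟨i, hi, htake, hlt⟩ | ⟨he, hjk⟩)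
    · have hin : i < n := by omega
      refine ⟨i, ?_, ?_, ?_⟩
      · simp; omega
      · rw [take_app_le hu (by omega), take_app_le ht (by omega)]; exact htake
      · rw [getD_app_lt hu hin, getD_app_lt ht hin]; exact hlt
    · subst he
      exact ⟨n, by simp [hu], by rw [take_app hu, take_app hu], by rw [getD_app hu, getD_app hu]; exact hjk⟩
lemma lexLt_trans {a b c : List ℕ} (hab : lexLt a b) (hbc : lexLt b c) : lexLt a c := by
  obtain ⟨i, hi, ti, gi⟩ := hab
  obtain ⟨i', hi', ti', gi'⟩ := hbc
  rcases lt_trichotomy i i' with h | h | h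
  · refine ⟨i, hi, ?_, ?_⟩
    · rw [ti]; exact take_eq_of_take_eq (le_of_lt h) ti'
    · rw [← getD_eq_of_take_eq h ti']; exact gi
  · subst h
    exact ⟨i, hi, ti.trans ti', gi.trans gi'⟩
  · refine ⟨i', ?_, ?_, ?_⟩
    · omega
    · rw [take_eq_of_take_eq (le_of_lt h) ti]; exact ti'
    · rw [getD_eq_of_take_eq h ti]; exact gi'

lemma lexLt_trichotomy (h : s.length = t.length) (hne : s ≠ t) : lexLt s t ∨ lexLt t s := by
  induction s generalizing t with
  | nil => cases t with
    | nil => exact absurd rfl hne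
    | cons b t' => simp at h
  | cons a s' ih =>
    cases t with
    | nil => simp at h
    | cons b t' =>
      rcases lt_trichotomy a b with hab | hab | hab
      · exact Or.inl ⟨0, by simp, by simp, by simpa using hab⟩
      · subst hab
        have hne' : s' ≠ t' := fun he => hne (by rw [he])
        have hlen : s'.length = t'.length := by simpa using h
        rcases ih hlen hne' with ⟨i, hi, ti, gi⟩ | ⟨i, hi, ti, gi⟩
        · exact Or.inl ⟨i + 1, by simpa using hi, by simpa using ti, by simpa using gi⟩
        · exact Or.inr ⟨i + 1, by simpa using hi, by simpa using ti, by simpa using gi⟩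
      · exact Or.inr ⟨0, by simp, by simp, by simpa using hab⟩
end

section TreeSums
variable {T : Set (List ℕ)} {ξ : List ℕ → ℝ≥0∞}

/-- restriction of a branch -/
def res (x : ℕ → ℕ) (n : ℕ) : List ℕ := (List.range n).map x

def Pred (T : Set (List ℕ)) (t : List ℕ) : Set (List ℕ) :=
  {s | s ∈ T ∧ s.length = t.length ∧ lexLt s t}

def aE (T : Set (List ℕ)) (ξ : List ℕ → ℝ≥0∞) (t : List ℕ) : ℝ≥0∞ :=
  ∑' s : {s : List ℕ // s ∈ T ∧ s.length = t.length ∧ lexLt s t}, ξ s.1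

def bE (T : Set (List ℕ)) (ξ : List ℕ → ℝ≥0∞) (t : List ℕ) : ℝ≥0∞ :=
  aE T ξ t + ξ t

def Lv (T : Set (List ℕ)) (n : ℕ) : Set (List ℕ) := {s | s ∈ T ∧ s.length = n}

def SumLt (T : Set (List ℕ)) (ξ : List ℕ → ℝ≥0∞) (t : List ℕ) (k : ℕ) : ℝ≥0∞ :=
  ∑' j : ℕ, Set.indicator {j | j < k ∧ t ++ [j] ∈ T} (fun j => ξ (t ++ [j])) j

lemma nil_mem (hT : IsTree T) : [] ∈ T := by
  obtain ⟨s, hs⟩ := hT.1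
  exact hT.2 [] s List.nil_prefix hs

lemma prefix_mem (hT : IsTree T) {t : List ℕ} (ht : t ∈ T) {s : List ℕ} (h : s <+: t) : s ∈ T :=
  hT.2 s t h ht

lemma aE_eq_indic (T : Set (List ℕ)) (ξ : List ℕ → ℝ≥0∞) (t : List ℕ) :
    aE T ξ t = ∑' s : List ℕ, (Pred T t).indicator ξ s := by
  exact tsum_subtype (Pred T t) ξ

lemma aT_eq (T : Set (List ℕ)) (ξ : List ℕ → ℝ≥0∞) (t : List ℕ) :
    aT T ξ t = (aE T ξ t).toReal := rfl

lemma keysplit (f : List ℕ → ℝ≥0∞) (hf : f [] = 0) :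
    ∑' s : List ℕ, f s = ∑' (u : List ℕ), ∑' (k : ℕ), f (u ++ [k]) := by
  rw [← ENNReal.tsum_prod]
  refine (Function.Injective.tsum_eq (g := fun p : List ℕ × ℕ => p.1 ++ [p.2]) ?_ ?_).symm
  · rintro ⟨u, k⟩ ⟨u', k'⟩ h
    simp only at h
    obtain ⟨h1, h2⟩ := List.append_inj' h rfl
    simp only [List.cons.injEq] at h2
    exact Prod.ext h1 h2.1
  · intro s hs
    have hne : s ≠ [] := by rintro rfl; exact hs hf
    exact ⟨(s.dropLast, s.getLast hne), List.dropLast_append_getLast hne⟩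

lemma not_max (hpr : Pruned T) {t : List ℕ} (ht : t ∈ T) : ¬ IsMaxNode T t := by
  intro hmax
  obtain ⟨k, hk⟩ := hpr t ht
  exact hmax k hk

lemma node_sum (hpr : Pruned T) (hξ : IsIPM T ξ) {t : List ℕ} (ht : t ∈ T) :
    ξ t = ∑' k : ℕ, Set.indicator {k | t ++ [k] ∈ T} (fun k => ξ (t ++ [k])) k := by
  rw [← tsum_subtype]
  exact hξ.2 t ht (not_max hpr ht)

lemma res_succ (x : ℕ → ℕ) (n : ℕ) : res x (n+1) = res x n ++ [x n] := by
  simp [res, List.range_succ]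

lemma res_length (x : ℕ → ℕ) (n : ℕ) : (res x n).length = n := by simp [res]

lemma lv_sum (hT : IsTree T) (hpr : Pruned T) (hξ : IsIPM T ξ) (n : ℕ) :
    ∑' s : List ℕ, (Lv T n).indicator ξ s = 1 := by
  induction n with
  | zero =>
    rw [tsum_eq_single ([] : List ℕ)]
    · rw [Set.indicator_of_mem (show ([]:List ℕ) ∈ Lv T 0 from ⟨nil_mem hT, rfl⟩), hξ.1]
    · intro b hb
      apply Set.indicator_of_notMem
      rintro ⟨-, hlen⟩
      exact hb (List.length_eq_zero_iff.mp hlen)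
  | succ n ih =>
    rw [keysplit _ (Set.indicator_of_notMem (by rintro ⟨-, h⟩; simp at h) _)]
    rw [← ih]
    apply tsum_congr
    intro u
    by_cases hu : u ∈ Lv T n
    · rw [Set.indicator_of_mem hu, node_sum hpr hξ hu.1]
      apply tsum_congr
      intro k
      by_cases hk : u ++ [k] ∈ T
      · rw [Set.indicator_of_mem (show u ++ [k] ∈ Lv T (n+1) from ⟨hk, by simp [hu.2]⟩),
          Set.indicator_of_mem (show k ∈ {k | u ++ [k] ∈ T} from hk)]
      · rw [Set.indicator_of_notMem (show u ++ [k] ∉ Lv T (n+1) from fun hc => hk hc.1),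
          Set.indicator_of_notMem (show k ∉ {k | u ++ [k] ∈ T} from hk)]
    · rw [Set.indicator_of_notMem hu]
      apply ENNReal.summable.tsum_eq_zero_iff.mpr
      intro k
      apply Set.indicator_of_notMem
      rintro ⟨hmem, hlen⟩
      exact hu ⟨prefix_mem hT hmem ⟨[k], rfl⟩, by simp at hlen; omega⟩

lemma aE_rec (hT : IsTree T) (hpr : Pruned T) (hξ : IsIPM T ξ) {t : List ℕ} (ht : t ∈ T) (k : ℕ) :
    aE T ξ (t ++ [k]) = aE T ξ t + SumLt T ξ t k := by
  rw [aE_eq_indic, aE_eq_indic]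
  rw [keysplit _ (Set.indicator_of_notMem (by rintro ⟨-, -, i, hi, -⟩; simp at hi) _)]
  have key : ∀ u : List ℕ, (∑' j : ℕ, (Pred T (t ++ [k])).indicator ξ (u ++ [j]))
      = (Pred T t).indicator ξ u + (if u = t then SumLt T ξ t k else 0) := by
    intro u
    by_cases hu : u ∈ Pred T t
    · obtain ⟨huT, hulen, hult⟩ := hu
      have hune : u ≠ t := lexLt_ne hult
      rw [Set.indicator_of_mem (show u ∈ Pred T t from ⟨huT, hulen, hult⟩), if_neg hune, add_zero,
        node_sum hpr hξ huT]
      apply tsum_congr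
      intro j
      by_cases hj : u ++ [j] ∈ T
      · rw [Set.indicator_of_mem (show j ∈ {k | u ++ [k] ∈ T} from hj),
          Set.indicator_of_mem (show u ++ [j] ∈ Pred T (t ++ [k]) from
            ⟨hj, by simp [hulen], (lexLt_app_iff hulen rfl).mpr (Or.inl hult)⟩)]
      · rw [Set.indicator_of_notMem (show j ∉ {k | u ++ [k] ∈ T} from hj),
          Set.indicator_of_notMem (show u ++ [j] ∉ Pred T (t ++ [k]) from fun hc => hj hc.1)]
    · by_cases hut : u = t
      · subst hut
        rw [Set.indicator_of_notMem hu, if_pos rfl, zero_add, SumLt]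
        apply tsum_congr
        intro j
        by_cases hj : j < k ∧ u ++ [j] ∈ T
        · rw [Set.indicator_of_mem (show j ∈ {j | j < k ∧ u ++ [j] ∈ T} from hj),
            Set.indicator_of_mem (show u ++ [j] ∈ Pred T (u ++ [k]) from
              ⟨hj.2, by simp, (lexLt_app_iff rfl rfl).mpr (Or.inr ⟨rfl, hj.1⟩)⟩)]
        · rw [Set.indicator_of_notMem (show j ∉ {j | j < k ∧ u ++ [j] ∈ T} from hj),
            Set.indicator_of_notMem (show u ++ [j] ∉ Pred T (u ++ [k]) from ?_)]
          rintro ⟨hmem, -, hlt⟩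
          rcases (lexLt_app_iff rfl rfl).mp hlt with h | ⟨-, h⟩
          · exact lexLt_ne h rfl
          · exact hj ⟨h, hmem⟩
      · rw [Set.indicator_of_notMem hu, if_neg hut, add_zero]
        apply ENNReal.summable.tsum_eq_zero_iff.mpr
        intro j
        apply Set.indicator_of_notMem
        rintro ⟨hmem, hlen, hlt⟩
        have hulen : u.length = t.length := by simp at hlen; omega
        rcases (lexLt_app_iff hulen rfl).mp hlt with h | ⟨h, -⟩
        · exact hu ⟨prefix_mem hT hmem ⟨[j], rfl⟩, hulen, h⟩
        · exact hut h
  rw [tsum_congr key, ENNReal.tsum_add, tsum_ite_eq]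

/-- generic: sum of indicator of `P` plus one extra point of `Q \ P` is at most sum over `Q`. -/
lemma tsum_ind_add_le {ι : Type*} {g : ι → ℝ≥0∞} {P Q : Set ι} (hPQ : P ⊆ Q) {i₀ : ι}
    (hi : i₀ ∈ Q) (hn : i₀ ∉ P) :
    (∑' i, P.indicator g i) + g i₀ ≤ ∑' i, Q.indicator g i := by
  classical
  rw [← tsum_ite_eq i₀ (fun _ => g i₀), ← ENNReal.tsum_add]
  apply ENNReal.tsum_le_tsum
  intro i
  by_cases hiP : i ∈ P
  · have : i ≠ i₀ := fun h => hn (h ▸ hiP)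
    rw [Set.indicator_of_mem hiP, if_neg this, add_zero, Set.indicator_of_mem (hPQ hiP)]
  · rw [Set.indicator_of_notMem hiP, zero_add]
    by_cases hii : i = i₀
    · subst hii
      rw [if_pos rfl, Set.indicator_of_mem hi]
    · rw [if_neg hii]
      exact zero_le

lemma bE_le_one (hT : IsTree T) (hpr : Pruned T) (hξ : IsIPM T ξ) {t : List ℕ} (ht : t ∈ T) :
    bE T ξ t ≤ 1 := by
  rw [bE, aE_eq_indic, ← lv_sum hT hpr hξ t.length]
  exact tsum_ind_add_le (fun s hs => (⟨hs.1, hs.2.1⟩ : s ∈ Lv T t.length))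
    (show t ∈ Lv T t.length from ⟨ht, rfl⟩) (fun hc => lexLt_ne hc.2.2 rfl)

lemma aE_ne_top (hT : IsTree T) (hpr : Pruned T) (hξ : IsIPM T ξ) {t : List ℕ} (ht : t ∈ T) :
    aE T ξ t ≠ ⊤ :=
  ne_top_of_le_ne_top ENNReal.one_ne_top (le_trans le_self_add (bE_le_one hT hpr hξ ht))

lemma xi_ne_top (hT : IsTree T) (hpr : Pruned T) (hξ : IsIPM T ξ) {t : List ℕ} (ht : t ∈ T) :
    ξ t ≠ ⊤ :=
  ne_top_of_le_ne_top ENNReal.one_ne_top (le_trans le_add_self (bE_le_one hT hpr hξ ht))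

lemma bE_ne_top (hT : IsTree T) (hpr : Pruned T) (hξ : IsIPM T ξ) {t : List ℕ} (ht : t ∈ T) :
    bE T ξ t ≠ ⊤ :=
  ne_top_of_le_ne_top ENNReal.one_ne_top (bE_le_one hT hpr hξ ht)

lemma bT_eq (hT : IsTree T) (hpr : Pruned T) (hξ : IsIPM T ξ) {t : List ℕ} (ht : t ∈ T) :
    bT T ξ t = (bE T ξ t).toReal := by
  rw [bT, aT_eq, bE, ENNReal.toReal_add (aE_ne_top hT hpr hξ ht) (xi_ne_top hT hpr hξ ht)]

/-- strict lex order gives interval order on endpoints -/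
lemma bE_le_aE_of_lexLt (hT : IsTree T) {s t : List ℕ} (hs : s ∈ T) (ht : t ∈ T)
    (hlen : s.length = t.length) (hlt : lexLt s t) :
    bE T ξ s ≤ aE T ξ t := by
  rw [bE, aE_eq_indic, aE_eq_indic]
  refine tsum_ind_add_le ?_ ⟨hs, hlen, hlt⟩ (fun hc => lexLt_ne hc.2.2 rfl)
  rintro u ⟨huT, hul, hu⟩
  exact ⟨huT, by omega, lexLt_trans hu hlt⟩

end TreeSums

section TreeSums2
variable {T : Set (List ℕ)} {ξ : List ℕ → ℝ≥0∞}

lemma aE_nil : aE T ξ [] = 0 := by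
  have : IsEmpty {s : List ℕ // s ∈ T ∧ s.length = ([] : List ℕ).length ∧ lexLt s []} := by
    constructor; rintro ⟨s, -, hlen, i, hi, -⟩
    simp only [List.length_nil] at hlen; omega
  exact tsum_empty

lemma bE_nil (hξ : IsIPM T ξ) : bE T ξ [] = 1 := by rw [bE, aE_nil, zero_add, hξ.1]

lemma exists_lex_max {n : ℕ} :
    ∀ F : Finset (List ℕ), (∀ s ∈ F, s.length = n) → F.Nonempty →
      ∃ t ∈ F, ∀ s ∈ F, s = t ∨ lexLt s t := by
  classical
  intro F
  induction F using Finset.induction_on with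
  | empty => intro _ h; exact absurd h (by simp)
  | @insert a F' ha ih =>
    intro hlen hne
    rcases F'.eq_empty_or_nonempty with rfl | hne'
    · exact ⟨a, by simp, by simp⟩
    · obtain ⟨t, htF, hmax⟩ := ih (fun s hs => hlen s (Finset.mem_insert_of_mem hs)) hne'
      by_cases hat : a = t ∨ lexLt a t
      · refine ⟨t, Finset.mem_insert_of_mem htF, fun s hs => ?_⟩
        rcases Finset.mem_insert.mp hs with rfl | hs
        · exact hat
        · exact hmax s hs
      · push_neg at hat
        have hlt : lexLt t a := by
          rcases lexLt_trichotomy (by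
            rw [hlen a (Finset.mem_insert_self a F'), hlen t (Finset.mem_insert_of_mem htF)])
            hat.1 with h | h
          · exact absurd h hat.2
          · exact h
        refine ⟨a, Finset.mem_insert_self a F', fun s hs => ?_⟩
        rcases Finset.mem_insert.mp hs with rfl | hs
        · exact Or.inl rfl
        · rcases hmax s hs with rfl | h
          · exact Or.inr hlt
          · exact Or.inr (lexLt_trans h hlt)

lemma exists_lex_min {n : ℕ} :
    ∀ F : Finset (List ℕ), (∀ s ∈ F, s.length = n) → F.Nonempty →
      ∃ t ∈ F, ∀ s ∈ F, s = t ∨ lexLt t s := by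
  classical
  intro F
  induction F using Finset.induction_on with
  | empty => intro _ h; exact absurd h (by simp)
  | @insert a F' ha ih =>
    intro hlen hne
    rcases F'.eq_empty_or_nonempty with rfl | hne'
    · exact ⟨a, by simp, by simp⟩
    · obtain ⟨t, htF, hmin⟩ := ih (fun s hs => hlen s (Finset.mem_insert_of_mem hs)) hne'
      by_cases hat : a = t ∨ lexLt t a
      · refine ⟨t, Finset.mem_insert_of_mem htF, fun s hs => ?_⟩
        rcases Finset.mem_insert.mp hs with rfl | hs
        · exact hat
        · exact hmin s hs
      · push_neg at hat
        have hlt : lexLt a t := by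
          rcases lexLt_trichotomy (by
            rw [hlen a (Finset.mem_insert_self a F'), hlen t (Finset.mem_insert_of_mem htF)])
            hat.1 with h | h
          · exact h
          · exact absurd h hat.2
        refine ⟨a, Finset.mem_insert_self a F', fun s hs => ?_⟩
        rcases Finset.mem_insert.mp hs with rfl | hs
        · exact Or.inl rfl
        · rcases hmin s hs with rfl | h
          · exact Or.inr hlt
          · exact Or.inr (lexLt_trans hlt h)

lemma tsum_singleton_ind (t : List ℕ) : ∑' s : List ℕ, ({t} : Set (List ℕ)).indicator ξ s = ξ t := by
  rw [tsum_eq_single t]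
  · exact Set.indicator_of_mem rfl ξ
  · exact fun b hb => Set.indicator_of_notMem (show b ∉ ({t} : Set (List ℕ)) from hb) ξ

lemma union_pred_sum (hT : IsTree T) (hpr : Pruned T) (hξ : IsIPM T ξ) {t : List ℕ}
    (ht : t ∈ T) :
    ∑' s : List ℕ, (Pred T t ∪ {t}).indicator ξ s = bE T ξ t := by
  rw [Set.indicator_union_of_disjoint (by
      rw [Set.disjoint_singleton_right]; exact fun hc => lexLt_ne hc.2.2 rfl) ξ]
  rw [ENNReal.tsum_add, ← aE_eq_indic, tsum_singleton_ind, bE]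

lemma tsum_le_of_bE_le (hT : IsTree T) (hpr : Pruned T) (hξ : IsIPM T ξ) {n : ℕ} {w : ℝ≥0∞}
    {D : Set (List ℕ)} (hD : D ⊆ Lv T n) (hw : ∀ t ∈ D, bE T ξ t ≤ w) :
    ∑' s : List ℕ, D.indicator ξ s ≤ w := by
  classical
  rw [ENNReal.tsum_eq_iSup_sum]
  refine iSup_le fun F => ?_
  have hsum : ∑ s ∈ F, D.indicator ξ s = ∑ s ∈ F.filter (· ∈ D), ξ s := by
    rw [Finset.sum_filter]
    exact Finset.sum_congr rfl (fun s _ => Set.indicator_apply D ξ s)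
  rw [hsum]
  rcases (F.filter (· ∈ D)).eq_empty_or_nonempty with he | hne
  · rw [he, Finset.sum_empty]; exact zero_le
  · obtain ⟨tm, htF, hmax⟩ := exists_lex_max (F.filter (· ∈ D))
      (fun s hs => (hD (Finset.mem_filter.mp hs).2).2) hne
    have htD : tm ∈ D := (Finset.mem_filter.mp htF).2
    calc ∑ s ∈ F.filter (· ∈ D), ξ s
        = ∑ s ∈ F.filter (· ∈ D), (Pred T tm ∪ {tm}).indicator ξ s := by
          refine Finset.sum_congr rfl (fun s hs => ?_)
          have hsD : s ∈ D := (Finset.mem_filter.mp hs).2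
          rcases hmax s hs with rfl | hlt
          · exact (Set.indicator_of_mem (Set.mem_union_right _ rfl) ξ).symm
          · exact (Set.indicator_of_mem (Set.mem_union_left _
              (show s ∈ Pred T tm from ⟨(hD hsD).1, by rw [(hD hsD).2, (hD htD).2], hlt⟩)) ξ).symm
      _ ≤ ∑' s : List ℕ, (Pred T tm ∪ {tm}).indicator ξ s :=
          Summable.sum_le_tsum _ (fun _ _ => zero_le) ENNReal.summable
      _ = bE T ξ tm := union_pred_sum hT hpr hξ (hD htD).1
      _ ≤ w := hw tm htD

lemma diff_pred_sum (hT : IsTree T) (hpr : Pruned T) (hξ : IsIPM T ξ) {n : ℕ} {t : List ℕ}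
    (ht : t ∈ T) (hlen : t.length = n) :
    ∑' s : List ℕ, (Lv T n \ Pred T t).indicator ξ s = 1 - aE T ξ t := by
  have hsub : Pred T t ⊆ Lv T n := fun s hs => ⟨hs.1, by rw [hs.2.1, hlen]⟩
  have hsplit : aE T ξ t + ∑' s : List ℕ, (Lv T n \ Pred T t).indicator ξ s = 1 := by
    rw [aE_eq_indic, ← ENNReal.tsum_add, ← lv_sum hT hpr hξ (ξ := ξ) n]
    apply tsum_congr
    intro s
    have hdisj : Disjoint (Pred T t) (Lv T n \ Pred T t) :=
      Set.disjoint_left.mpr (fun a (ha : a ∈ Pred T t) (hat : a ∈ Lv T n \ Pred T t) => hat.2 ha)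
    have h1 := congrFun (Set.indicator_union_of_disjoint hdisj ξ) s
    rw [Set.union_diff_cancel hsub] at h1
    exact h1.symm
  exact ENNReal.eq_sub_of_add_eq (aE_ne_top hT hpr hξ ht) (by rw [add_comm]; exact hsplit)

lemma tsum_le_of_aE_ge (hT : IsTree T) (hpr : Pruned T) (hξ : IsIPM T ξ) {n : ℕ} {w : ℝ≥0∞}
    {C : Set (List ℕ)} (hC : C ⊆ Lv T n) (hw : ∀ t ∈ C, w ≤ aE T ξ t) :
    ∑' s : List ℕ, C.indicator ξ s ≤ 1 - w := by
  classical
  rw [ENNReal.tsum_eq_iSup_sum]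
  refine iSup_le fun F => ?_
  have hsum : ∑ s ∈ F, C.indicator ξ s = ∑ s ∈ F.filter (· ∈ C), ξ s := by
    rw [Finset.sum_filter]
    exact Finset.sum_congr rfl (fun s _ => Set.indicator_apply C ξ s)
  rw [hsum]
  rcases (F.filter (· ∈ C)).eq_empty_or_nonempty with he | hne
  · rw [he, Finset.sum_empty]; exact zero_le
  · obtain ⟨tm, htF, hmin⟩ := exists_lex_min (F.filter (· ∈ C))
      (fun s hs => (hC (Finset.mem_filter.mp hs).2).2) hne
    have htC : tm ∈ C := (Finset.mem_filter.mp htF).2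
    calc ∑ s ∈ F.filter (· ∈ C), ξ s
        = ∑ s ∈ F.filter (· ∈ C), (Lv T n \ Pred T tm).indicator ξ s := by
          refine Finset.sum_congr rfl (fun s hs => ?_)
          have hsC : s ∈ C := (Finset.mem_filter.mp hs).2
          refine (Set.indicator_of_mem (show s ∈ Lv T n \ Pred T tm from ⟨hC hsC, ?_⟩) ξ).symm
          rintro ⟨-, -, hlt⟩
          rcases hmin s hs with rfl | h
          · exact lexLt_ne hlt rfl
          · exact lexLt_ne (lexLt_trans hlt h) rfl
      _ ≤ ∑' s : List ℕ, (Lv T n \ Pred T tm).indicator ξ s :=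
          Summable.sum_le_tsum _ (fun _ _ => zero_le) ENNReal.summable
      _ = 1 - aE T ξ tm := diff_pred_sum hT hpr hξ (hC htC).1 (hC htC).2
      _ ≤ 1 - w := tsub_le_tsub_left (hw tm htC) 1

end TreeSums2

section TreeSums3
variable {T : Set (List ℕ)} {ξ : List ℕ → ℝ≥0∞} {t : List ℕ}

lemma aE_le_app (hT : IsTree T) (hpr : Pruned T) (hξ : IsIPM T ξ) (ht : t ∈ T) (k : ℕ) :
    aE T ξ t ≤ aE T ξ (t ++ [k]) := by
  rw [aE_rec hT hpr hξ ht]; exact le_self_add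

lemma bE_app_le (hT : IsTree T) (hpr : Pruned T) (hξ : IsIPM T ξ) (ht : t ∈ T) {k : ℕ}
    (hk : t ++ [k] ∈ T) : bE T ξ (t ++ [k]) ≤ bE T ξ t := by
  rw [bE, bE, aE_rec hT hpr hξ ht, add_assoc]
  refine add_le_add_right ?_ _
  rw [node_sum hpr hξ ht]
  exact tsum_ind_add_le (fun j hj => hj.2) (show k ∈ {j | t ++ [j] ∈ T} from hk)
    (fun hc => lt_irrefl k hc.1)

lemma xi_app_le (hpr : Pruned T) (hξ : IsIPM T ξ) (ht : t ∈ T) {k : ℕ} (hk : t ++ [k] ∈ T) :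
    ξ (t ++ [k]) ≤ ξ t := by
  classical
  rw [node_sum hpr hξ ht, ← tsum_ite_eq k (fun _ => ξ (t ++ [k]))]
  apply ENNReal.tsum_le_tsum
  intro j
  by_cases hj : j = k
  · subst hj
    rw [if_pos rfl, Set.indicator_of_mem (show j ∈ {j | t ++ [j] ∈ T} from hk)]
  · rw [if_neg hj]; exact zero_le

lemma sumLt_zero_of_no_child {K : ℕ} (h : ∀ j, j < K → t ++ [j] ∉ T) : SumLt T ξ t K = 0 :=
  ENNReal.summable.tsum_eq_zero_iff.mpr fun j =>
    Set.indicator_of_notMem (fun hc => h j hc.1 hc.2) _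

lemma sumLt_step {K jm : ℕ} (hjm : t ++ [jm] ∈ T) (hjK : jm < K)
    (hmax : ∀ j, j < K → t ++ [j] ∈ T → j ≤ jm) :
    SumLt T ξ t K ≤ SumLt T ξ t jm + ξ (t ++ [jm]) := by
  classical
  rw [SumLt, SumLt, ← tsum_ite_eq jm (fun _ => ξ (t ++ [jm])), ← ENNReal.tsum_add]
  apply ENNReal.tsum_le_tsum
  intro j
  by_cases hj : j < K ∧ t ++ [j] ∈ T
  · rw [Set.indicator_of_mem (show j ∈ {j | j < K ∧ t ++ [j] ∈ T} from hj)]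
    rcases eq_or_lt_of_le (hmax j hj.1 hj.2) with rfl | hlt
    · rw [Set.indicator_of_notMem
        (show j ∉ {i | i < j ∧ t ++ [i] ∈ T} from fun hc => lt_irrefl j hc.1), if_pos rfl,
        zero_add]
    · rw [Set.indicator_of_mem (show j ∈ {i | i < jm ∧ t ++ [i] ∈ T} from ⟨hlt, hj.2⟩),
        if_neg (by omega)]
      simp
  · rw [Set.indicator_of_notMem (show j ∉ {j | j < K ∧ t ++ [j] ∈ T} from hj)]
    exact zero_le

lemma helper_lt (hT : IsTree T) (hpr : Pruned T) (hξ : IsIPM T ξ) (ht : t ∈ T) {w : ℝ≥0∞} {K : ℕ}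
    (haw : aE T ξ t < w)
    (hchild : ∀ j, j < K → t ++ [j] ∈ T → bE T ξ (t ++ [j]) < w) :
    aE T ξ (t ++ [K]) < w := by
  rw [aE_rec hT hpr hξ ht]
  rcases Classical.em (∃ j, j < K ∧ t ++ [j] ∈ T) with ⟨j, hj⟩ | hno
  · classical
    have hne : ((Finset.range K).filter (fun j => t ++ [j] ∈ T)).Nonempty :=
      ⟨j, by simp [Finset.mem_filter, Finset.mem_range, hj.1, hj.2]⟩
    obtain ⟨hjm1, hjm2⟩ := Finset.mem_filter.mp (Finset.max'_mem _ hne)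
    rw [Finset.mem_range] at hjm1
    have hmaxj : ∀ i, i < K → t ++ [i] ∈ T →
        i ≤ ((Finset.range K).filter (fun j => t ++ [j] ∈ T)).max' hne := fun i h1 h2 =>
      Finset.le_max' _ i (by simp [Finset.mem_filter, Finset.mem_range, h1, h2])
    calc aE T ξ t + SumLt T ξ t K
        ≤ aE T ξ t + (SumLt T ξ t (((Finset.range K).filter (fun j => t ++ [j] ∈ T)).max' hne)
            + ξ (t ++ [((Finset.range K).filter (fun j => t ++ [j] ∈ T)).max' hne])) :=
          add_le_add_right (sumLt_step hjm2 hjm1 hmaxj) _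
      _ = bE T ξ (t ++ [((Finset.range K).filter (fun j => t ++ [j] ∈ T)).max' hne]) := by
          rw [bE, aE_rec hT hpr hξ ht, add_assoc]
      _ < w := hchild _ hjm1 hjm2
  · push_neg at hno
    rw [sumLt_zero_of_no_child hno, add_zero]
    exact haw

lemma exists_straddling_child (hT : IsTree T) (hpr : Pruned T) (hξ : IsIPM T ξ) (ht : t ∈ T)
    {w : ℝ≥0∞} (h1 : aE T ξ t < w) (h2 : w < bE T ξ t) :
    ∃ k, t ++ [k] ∈ T ∧ aE T ξ (t ++ [k]) ≤ w ∧ w ≤ bE T ξ (t ++ [k]) := by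
  by_contra hcon
  push_neg at hcon
  have key : ∀ k, t ++ [k] ∈ T → bE T ξ (t ++ [k]) < w := by
    intro k
    induction k using Nat.strong_induction_on with
    | _ k ih =>
      intro hk
      have haE : aE T ξ (t ++ [k]) < w := helper_lt hT hpr hξ ht h1 (fun j hj hjT => ih j hj hjT)
      exact hcon k hk haE.le
  have hbound : bE T ξ t ≤ w := by
    classical
    rw [bE, node_sum hpr hξ ht, ENNReal.tsum_eq_iSup_sum, ENNReal.add_iSup]
    refine iSup_le fun F => ?_
    have hsum : ∑ j ∈ F, Set.indicator {j | t ++ [j] ∈ T} (fun j => ξ (t ++ [j])) j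
        = ∑ j ∈ F.filter (fun j => t ++ [j] ∈ T), ξ (t ++ [j]) := by
      rw [Finset.sum_filter]
      exact Finset.sum_congr rfl (fun j _ =>
        Set.indicator_apply {j | t ++ [j] ∈ T} (fun j => ξ (t ++ [j])) j)
    rw [hsum]
    rcases (F.filter (fun j => t ++ [j] ∈ T)).eq_empty_or_nonempty with he | hne
    · rw [he, Finset.sum_empty, add_zero]; exact h1.le
    · set K := (F.filter (fun j => t ++ [j] ∈ T)).max' hne + 1 with hK
      have hsum2 : ∑ j ∈ F.filter (fun j => t ++ [j] ∈ T), ξ (t ++ [j]) ≤ SumLt T ξ t K := by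
        rw [SumLt]
        have heq : ∑ j ∈ F.filter (fun j => t ++ [j] ∈ T), ξ (t ++ [j])
            = ∑ j ∈ F.filter (fun j => t ++ [j] ∈ T),
                Set.indicator {j | j < K ∧ t ++ [j] ∈ T} (fun j => ξ (t ++ [j])) j := by
          refine Finset.sum_congr rfl (fun j hj => ?_)
          have hjT : t ++ [j] ∈ T := (Finset.mem_filter.mp hj).2
          have hjK : j < K := by
            have := Finset.le_max' _ j hj
            omega
          exact (Set.indicator_of_mem (show j ∈ {j | j < K ∧ t ++ [j] ∈ T} from ⟨hjK, hjT⟩)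
            (fun j => ξ (t ++ [j]))).symm
        rw [heq]
        exact Summable.sum_le_tsum _ (fun _ _ => zero_le) ENNReal.summable
      calc aE T ξ t + ∑ j ∈ F.filter (fun j => t ++ [j] ∈ T), ξ (t ++ [j])
          ≤ aE T ξ t + SumLt T ξ t K := add_le_add_right hsum2 _
        _ = aE T ξ (t ++ [K]) := (aE_rec hT hpr hξ ht K).symm
        _ ≤ w := (helper_lt hT hpr hξ ht h1 (fun j hj hjT => key j hjT)).le
  exact absurd h2 (not_lt.mpr hbound)

lemma lv_le_sum (hT : IsTree T) (hpr : Pruned T) (hξ : IsIPM T ξ) {n : ℕ} {w : ℝ≥0∞}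
    (hw : w ≤ 1) :
    w ≤ ∑' s : List ℕ, ({t | (t ∈ T ∧ t.length = n) ∧ aE T ξ t ≤ w}).indicator ξ s := by
  by_contra hcon
  push_neg at hcon
  have hEnc : ∑' s : List ℕ, ({t | (t ∈ T ∧ t.length = n) ∧ ¬ aE T ξ t ≤ w}).indicator ξ s
      ≤ 1 - w :=
    tsum_le_of_aE_ge hT hpr hξ (fun t htc => htc.1) (fun t htc => (not_le.mp htc.2).le)
  have hsplit : (∑' s : List ℕ, ({t | (t ∈ T ∧ t.length = n) ∧ aE T ξ t ≤ w}).indicator ξ s)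
      + (∑' s : List ℕ, ({t | (t ∈ T ∧ t.length = n) ∧ ¬ aE T ξ t ≤ w}).indicator ξ s) = 1 := by
    rw [← ENNReal.tsum_add, ← lv_sum hT hpr hξ (ξ := ξ) n]
    apply tsum_congr
    intro s
    by_cases h1 : s ∈ T ∧ s.length = n
    · by_cases h2 : aE T ξ s ≤ w
      · rw [Set.indicator_of_mem
            (show s ∈ {t | (t ∈ T ∧ t.length = n) ∧ aE T ξ t ≤ w} from ⟨h1, h2⟩),
          Set.indicator_of_notMem
            (show s ∉ {t | (t ∈ T ∧ t.length = n) ∧ ¬ aE T ξ t ≤ w} from fun hc => hc.2 h2),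
          Set.indicator_of_mem (show s ∈ Lv T n from h1), add_zero]
      · rw [Set.indicator_of_notMem
            (show s ∉ {t | (t ∈ T ∧ t.length = n) ∧ aE T ξ t ≤ w} from fun hc => h2 hc.2),
          Set.indicator_of_mem
            (show s ∈ {t | (t ∈ T ∧ t.length = n) ∧ ¬ aE T ξ t ≤ w} from ⟨h1, h2⟩),
          Set.indicator_of_mem (show s ∈ Lv T n from h1), zero_add]
    · rw [Set.indicator_of_notMem
          (show s ∉ {t | (t ∈ T ∧ t.length = n) ∧ aE T ξ t ≤ w} from fun hc => h1 hc.1),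
        Set.indicator_of_notMem
          (show s ∉ {t | (t ∈ T ∧ t.length = n) ∧ ¬ aE T ξ t ≤ w} from fun hc => h1 hc.1),
        Set.indicator_of_notMem (show s ∉ Lv T n from h1), add_zero]
  have hfin : (1 : ℝ≥0∞) - w ≠ ⊤ := (tsub_le_self.trans_lt ENNReal.one_lt_top).ne
  have hlt : (1 : ℝ≥0∞) < 1 := by
    calc (1 : ℝ≥0∞) = _ + _ := hsplit.symm
      _ ≤ _ + (1 - w) := add_le_add_right hEnc _
      _ < w + (1 - w) := ENNReal.add_lt_add_right hfin hcon
      _ = 1 := by rw [add_comm]; exact tsub_add_cancel_of_le hw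
  exact lt_irrefl _ hlt

end TreeSums3

section Topol
variable {T : Set (List ℕ)} {ξ : List ℕ → ℝ≥0∞}

lemma res_getD {y : ℕ → ℕ} {n i : ℕ} (hi : i < n) : (res y n).getD i 0 = y i := by
  rw [List.getD_eq_getElem _ 0 (by simpa [res] using hi)]
  simp [res]

lemma res_eq_iff {y : ℕ → ℕ} {t : List ℕ} {n : ℕ} (ht : t.length = n) :
    res y n = t ↔ ∀ i < n, y i = t.getD i 0 := by
  constructor
  · intro h i hi
    rw [← h, res_getD hi]
  · intro h
    apply List.ext_getElem (by simp [res, ht])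
    intro i h1 h2
    have hi : i < n := by simpa [res] using h1
    have := h i hi
    rw [List.getD_eq_getElem _ 0 h2] at this
    simpa [res] using this

lemma res_eq_res_iff {y z : ℕ → ℕ} {n : ℕ} :
    res y n = res z n ↔ ∀ i < n, y i = z i := by
  rw [res_eq_iff (res_length z n)]
  constructor
  · intro h i hi; rw [h i hi, res_getD hi]
  · intro h i hi; rw [h i hi, res_getD hi]

lemma isOpen_res_eq_amb (n : ℕ) (t : List ℕ) (ht : t.length = n) :
    IsOpen {y : ℕ → ℕ | res y n = t} := by
  have : {y : ℕ → ℕ | res y n = t} = ⋂ i ∈ Finset.range n, {y : ℕ → ℕ | y i = t.getD i 0} := by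
    ext y
    simp only [Set.mem_setOf_eq, Set.mem_iInter, Finset.mem_range]
    exact res_eq_iff ht
  rw [this]
  refine isOpen_biInter_finset fun i _ => ?_
  have h2 : {y : ℕ → ℕ | y i = t.getD i 0} = (fun y : ℕ → ℕ => y i) ⁻¹' {t.getD i 0} := rfl
  rw [h2]
  exact (isOpen_discrete _).preimage (continuous_apply i)

lemma isClosed_limT (hT : IsTree T) : IsClosed (limT T) := by
  rw [← isOpen_compl_iff]
  rw [isOpen_iff_forall_mem_open]
  intro x hx
  simp only [Set.mem_compl_iff, limT, Set.mem_setOf_eq, not_forall] at hx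
  obtain ⟨n, hn⟩ := hx
  refine ⟨{y : ℕ → ℕ | res y n = res x n}, ?_, isOpen_res_eq_amb n _ (res_length x n), rfl⟩
  intro y hy
  simp only [Set.mem_setOf_eq] at hy
  intro hyT
  apply hn
  have h5 : res x n ∈ T := hy ▸ (hyT n : res y n ∈ T)
  exact h5

lemma cyl_eq (t : List ℕ) : cyl T t = Subtype.val ⁻¹' {y : ℕ → ℕ | res y t.length = t} := rfl

lemma isOpen_cyl (t : List ℕ) : IsOpen (cyl T t) := by
  rw [cyl_eq]
  exact (isOpen_res_eq_amb t.length t rfl).preimage continuous_subtype_val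

lemma mem_cyl_res (x : ↥(limT T)) (n : ℕ) : x ∈ cyl T (res x.1 n) := by
  show res x.1 (res x.1 n).length = res x.1 n
  rw [res_length]

lemma res_mem (x : ↥(limT T)) (n : ℕ) : res x.1 n ∈ T := x.2 n

lemma fXi_eq (x : ↥(limT T)) : fXi T ξ x = ⨆ n : ℕ, aT T ξ (res x.1 n) := rfl

-- endpoint monotonicity along a branch
lemma aE_res_mono (hT : IsTree T) (hpr : Pruned T) (hξ : IsIPM T ξ) (x : ↥(limT T)) :
    Monotone fun n => aE T ξ (res x.1 n) := by
  apply monotone_nat_of_le_succ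
  intro n
  rw [res_succ]
  exact aE_le_app hT hpr hξ (res_mem x n) _

lemma bE_res_anti (hT : IsTree T) (hpr : Pruned T) (hξ : IsIPM T ξ) (x : ↥(limT T)) :
    Antitone fun n => bE T ξ (res x.1 n) := by
  apply antitone_nat_of_succ_le
  intro n
  have h2 : res x.1 (n+1) ∈ T := res_mem x (n+1)
  rw [res_succ] at h2 ⊢
  exact bE_app_le hT hpr hξ (res_mem x n) h2

lemma xi_res_anti (hpr : Pruned T) (hξ : IsIPM T ξ) (x : ↥(limT T)) :
    Antitone fun n => ξ (res x.1 n) := by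
  apply antitone_nat_of_succ_le
  intro n
  have h2 : res x.1 (n+1) ∈ T := res_mem x (n+1)
  rw [res_succ] at h2 ⊢
  exact xi_app_le hpr hξ (res_mem x n) h2

lemma aE_le_bE_all (hT : IsTree T) (hpr : Pruned T) (hξ : IsIPM T ξ) (x : ↥(limT T)) (m n : ℕ) :
    aE T ξ (res x.1 m) ≤ bE T ξ (res x.1 n) := by
  rcases le_total m n with h | h
  · exact le_trans (aE_res_mono hT hpr hξ x h) le_self_add
  · exact le_trans le_self_add (bE_res_anti hT hpr hξ x h)

lemma aT_bddAbove (hT : IsTree T) (hpr : Pruned T) (hξ : IsIPM T ξ) (x : ↥(limT T)) (n : ℕ) :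
    ∀ m, aT T ξ (res x.1 m) ≤ bT T ξ (res x.1 n) := by
  intro m
  rw [aT_eq, bT_eq hT hpr hξ (res_mem x n)]
  exact ENNReal.toReal_mono (bE_ne_top hT hpr hξ (res_mem x n)) (aE_le_bE_all hT hpr hξ x m n)

lemma aT_le_f (hT : IsTree T) (hpr : Pruned T) (hξ : IsIPM T ξ) (x : ↥(limT T)) (n : ℕ) :
    aT T ξ (res x.1 n) ≤ fXi T ξ x := by
  rw [fXi_eq]
  exact le_ciSup (f := fun n => aT T ξ (res x.1 n))
    ⟨bT T ξ (res x.1 0), Set.forall_mem_range.mpr (aT_bddAbove hT hpr hξ x 0)⟩ n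

lemma f_le_bT (hT : IsTree T) (hpr : Pruned T) (hξ : IsIPM T ξ) (x : ↥(limT T)) (n : ℕ) :
    fXi T ξ x ≤ bT T ξ (res x.1 n) := by
  rw [fXi_eq]
  exact ciSup_le (aT_bddAbove hT hpr hξ x n)

lemma res_zero (x : ℕ → ℕ) : res x 0 = [] := rfl

lemma aT_nil : aT T ξ [] = 0 := by rw [aT_eq, aE_nil]; rfl

lemma f_nonneg (hT : IsTree T) (hpr : Pruned T) (hξ : IsIPM T ξ) (x : ↥(limT T)) :
    0 ≤ fXi T ξ x := by
  have := aT_le_f hT hpr hξ x 0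
  rwa [res_zero, aT_nil] at this

lemma f_le_one (hT : IsTree T) (hpr : Pruned T) (hξ : IsIPM T ξ) (x : ↥(limT T)) :
    fXi T ξ x ≤ 1 := by
  have := f_le_bT hT hpr hξ x 0
  rwa [res_zero, bT_eq hT hpr hξ (nil_mem hT), bE_nil hξ, ENNReal.toReal_one] at this

lemma aE_le_ofReal_f (hT : IsTree T) (hpr : Pruned T) (hξ : IsIPM T ξ) (x : ↥(limT T)) (n : ℕ) :
    aE T ξ (res x.1 n) ≤ ENNReal.ofReal (fXi T ξ x) := by
  rw [← ENNReal.ofReal_toReal (aE_ne_top hT hpr hξ (res_mem x n))]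
  exact ENNReal.ofReal_le_ofReal (aT_le_f hT hpr hξ x n)

lemma ofReal_f_le_bE (hT : IsTree T) (hpr : Pruned T) (hξ : IsIPM T ξ) (x : ↥(limT T)) (n : ℕ) :
    ENNReal.ofReal (fXi T ξ x) ≤ bE T ξ (res x.1 n) :=
  ENNReal.ofReal_le_of_le_toReal (by rw [← bT_eq hT hpr hξ (res_mem x n)]; exact f_le_bT hT hpr hξ x n)

lemma xi_res_tendsto (hpr : Pruned T) (hξ : IsIPM T ξ) (hfree : FreeIPM T ξ) (x : ↥(limT T)) :
    Filter.Tendsto (fun n => ξ (res x.1 n)) Filter.atTop (nhds 0) := by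
  have h := tendsto_atTop_iInf (xi_res_anti hpr hξ x)
  have h0 : (⨅ n, ξ (res x.1 n)) = 0 := hfree x.1 x.2
  rwa [h0] at h

lemma xi_res_toReal_tendsto (hpr : Pruned T) (hξ : IsIPM T ξ) (hfree : FreeIPM T ξ)
    (x : ↥(limT T)) :
    Filter.Tendsto (fun n => (ξ (res x.1 n)).toReal) Filter.atTop (nhds 0) := by
  have h := (ENNReal.tendsto_toReal (a := 0) (by simp)).comp (xi_res_tendsto hpr hξ hfree x)
  exact h

lemma continuous_fXi (hT : IsTree T) (hpr : Pruned T) (hξ : IsIPM T ξ) (hfree : FreeIPM T ξ) :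
    Continuous (fXi T ξ) := by
  rw [continuous_iff_continuousAt]
  intro x
  refine Metric.tendsto_nhds.mpr ?_
  intro ε hε
  obtain ⟨n, hn⟩ : ∃ n, (ξ (res x.1 n)).toReal < ε :=
    ((xi_res_toReal_tendsto hpr hξ hfree x).eventually_lt_const hε).exists
  have hopen : IsOpen {y : ↥(limT T) | res y.1 n = res x.1 n} :=
    (isOpen_res_eq_amb n _ (res_length x.1 n)).preimage continuous_subtype_val
  refine Filter.eventually_of_mem (hopen.mem_nhds (by exact rfl)) (fun y hy => ?_)
  have hy' : res y.1 n = res x.1 n := hy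
  have h1 : aT T ξ (res x.1 n) ≤ fXi T ξ y := by
    rw [← hy']; exact aT_le_f hT hpr hξ y n
  have h2 : fXi T ξ y ≤ bT T ξ (res x.1 n) := by
    rw [← hy']; exact f_le_bT hT hpr hξ y n
  have h3 : aT T ξ (res x.1 n) ≤ fXi T ξ x := aT_le_f hT hpr hξ x n
  have h4 : fXi T ξ x ≤ bT T ξ (res x.1 n) := f_le_bT hT hpr hξ x n
  have hw : bT T ξ (res x.1 n) = aT T ξ (res x.1 n) + (ξ (res x.1 n)).toReal := rfl
  rw [Real.dist_eq, abs_sub_lt_iff]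
  constructor <;> linarith

end Topol

section Meas
variable {T : Set (List ℕ)} {ξ : List ℕ → ℝ≥0∞} {lam : Measure ↥(limT T)}

lemma cyl_disjoint {s t : List ℕ} (hlen : s.length = t.length) (hne : s ≠ t) :
    Disjoint (cyl T s) (cyl T t) := by
  rw [Set.disjoint_left]
  intro x hxs hxt
  have h1 : res x.1 s.length = s := hxs
  have h2 : res x.1 t.length = t := hxt
  rw [hlen] at h1
  exact hne (h1.symm.trans h2)

lemma set_eq_biUnion (P : List ℕ → Prop) (n : ℕ) :
    {x : ↥(limT T) | P (res x.1 n)} = ⋃ t ∈ {t | (t ∈ T ∧ t.length = n) ∧ P t}, cyl T t := by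
  ext x
  simp only [Set.mem_setOf_eq, Set.mem_iUnion]
  constructor
  · intro hP
    refine ⟨res x.1 n, ⟨⟨res_mem x n, res_length x.1 n⟩, hP⟩, mem_cyl_res x n⟩
  · rintro ⟨t, ⟨⟨htT, htlen⟩, hPt⟩, hx⟩
    have hx' : res x.1 t.length = t := hx
    rw [htlen] at hx'
    rw [hx']
    exact hPt

lemma lam_set_P (hcyl : ∀ t ∈ T, lam (cyl T t) = ξ t) (P : List ℕ → Prop) (n : ℕ) :
    lam {x : ↥(limT T) | P (res x.1 n)}
      = ∑' s : List ℕ, ({t | (t ∈ T ∧ t.length = n) ∧ P t}).indicator ξ s := by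
  rw [set_eq_biUnion, Set.biUnion_eq_iUnion]
  rw [measure_iUnion ?disj ?meas]
  case disj =>
    rintro ⟨a, ha⟩ ⟨b, hb⟩ hne
    have hab : a ≠ b := fun h => hne (Subtype.ext h)
    exact cyl_disjoint (by rw [ha.1.2, hb.1.2]) hab
  case meas => exact fun t => (isOpen_cyl t.1).measurableSet
  have hc : (∑' t : ↥{t | (t ∈ T ∧ t.length = n) ∧ P t}, lam (cyl T t.1))
      = ∑' t : ↥{t | (t ∈ T ∧ t.length = n) ∧ P t}, ξ t.1 := tsum_congr (fun t => hcyl t.1 t.2.1.1)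
  rw [hc]
  exact tsum_subtype {t | (t ∈ T ∧ t.length = n) ∧ P t} ξ

lemma measurableSet_P (P : List ℕ → Prop) (n : ℕ) :
    MeasurableSet {x : ↥(limT T) | P (res x.1 n)} := by
  rw [set_eq_biUnion]
  exact MeasurableSet.biUnion (Set.to_countable _)
    (fun t _ => (isOpen_cyl t).measurableSet)

lemma singleton_eq_iInter (x : ↥(limT T)) : ({x} : Set ↥(limT T)) = ⋂ n, cyl T (res x.1 n) := by
  ext z
  simp only [Set.mem_singleton_iff, Set.mem_iInter]
  constructor
  · rintro rfl n; exact mem_cyl_res z n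
  · intro h
    apply Subtype.ext
    funext i
    have hi := h (i + 1)
    have hi' : res z.1 (i+1) = res x.1 (i+1) := by
      have : res z.1 (res x.1 (i+1)).length = res x.1 (i+1) := hi
      rwa [res_length] at this
    exact res_eq_res_iff.mp hi' i (by omega)

lemma cyl_res_anti (x : ↥(limT T)) : Antitone fun n => cyl T (res x.1 n) := by
  intro m n h z hz
  have hz' : res z.1 (res x.1 n).length = res x.1 n := hz
  rw [res_length] at hz'
  show res z.1 (res x.1 m).length = res x.1 m
  rw [res_length]
  exact res_eq_res_iff.mpr (fun i hi => res_eq_res_iff.mp hz' i (by omega))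

lemma lam_singleton (hfree : FreeIPM T ξ) [IsFiniteMeasure lam]
    (hcyl : ∀ t ∈ T, lam (cyl T t) = ξ t) (x : ↥(limT T)) : lam {x} = 0 := by
  rw [singleton_eq_iInter x, Directed.measure_iInter
    (fun n => ((isOpen_cyl _).measurableSet).nullMeasurableSet)
    ((cyl_res_anti x).directed_ge) ⟨0, measure_ne_top lam _⟩]
  have h1 : ∀ n, lam (cyl T (res x.1 n)) = ξ (res x.1 n) := fun n => hcyl _ (res_mem x n)
  rw [iInf_congr h1]
  exact hfree x.1 x.2

lemma lam_preimage_Iic (hT : IsTree T) (hpr : Pruned T) (hξ : IsIPM T ξ) (hfree : FreeIPM T ξ)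
    [IsProbabilityMeasure lam] (hcyl : ∀ t ∈ T, lam (cyl T t) = ξ t) {y : ℝ}
    (hy0 : 0 ≤ y) (hy1 : y ≤ 1) :
    lam (fXi T ξ ⁻¹' Set.Iic y) = ENNReal.ofReal y := by
  set w := ENNReal.ofReal y with hwdef
  have hw1 : w ≤ 1 := ENNReal.ofReal_le_one.mpr hy1
  have hwtop : w ≠ ⊤ := ENNReal.ofReal_ne_top
  set U : ℕ → Set ↥(limT T) := fun n => {x | bE T ξ (res x.1 n) ≤ w} with hUdef
  set W : ℕ → Set ↥(limT T) := fun n => {x | aE T ξ (res x.1 n) ≤ w} with hWdef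
  have hUmeas : ∀ n, MeasurableSet (U n) := fun n => measurableSet_P (fun t => bE T ξ t ≤ w) n
  have hWmeas : ∀ n, MeasurableSet (W n) := fun n => measurableSet_P (fun t => aE T ξ t ≤ w) n
  have hUmono : Monotone U := fun m n h x hx => le_trans (bE_res_anti hT hpr hξ x h) hx
  have hWanti : Antitone W := fun m n h x hx => le_trans (aE_res_mono hT hpr hξ x h) hx
  have hUf : ∀ n, U n ⊆ fXi T ξ ⁻¹' Set.Iic y := by
    intro n x hx
    have h1 : fXi T ξ x ≤ bT T ξ (res x.1 n) := f_le_bT hT hpr hξ x n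
    have h2 : bT T ξ (res x.1 n) ≤ y := by
      rw [bT_eq hT hpr hξ (res_mem x n), ← ENNReal.toReal_ofReal hy0]
      exact ENNReal.toReal_mono hwtop hx
    exact Set.mem_Iic.mpr (h1.trans h2)
  have hfW : ∀ n, fXi T ξ ⁻¹' Set.Iic y ⊆ W n := by
    intro n x hx
    exact le_trans (aE_le_ofReal_f hT hpr hξ x n) (ENNReal.ofReal_le_ofReal hx)
  have hUlam : ∀ n, lam (U n) ≤ w := by
    intro n
    rw [hUdef, lam_set_P hcyl (fun t => bE T ξ t ≤ w) n]
    exact tsum_le_of_bE_le hT hpr hξ (fun t ht => (show t ∈ Lv T n from ht.1)) (fun t ht => ht.2)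
  have hWlam : ∀ n, w ≤ lam (W n) := by
    intro n
    rw [hWdef, lam_set_P hcyl (fun t => aE T ξ t ≤ w) n]
    exact lv_le_sum hT hpr hξ hw1
  have hsub : ((⋂ n, W n) \ (⋃ n, U n)).Subsingleton := by
    intro x hx x' hx'
    by_contra hne
    have hdiffi : ∃ i, x.1 i ≠ x'.1 i := by
      by_contra h
      push_neg at h
      exact hne (Subtype.ext (funext h))
    obtain ⟨i, hi⟩ := hdiffi
    have hdiff : res x.1 (i+1) ≠ res x'.1 (i+1) :=
      fun he => hi ((res_eq_res_iff.mp he) i (by omega))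
    have hxW : ∀ z ∈ (⋂ n, W n) \ (⋃ n, U n), ∀ n,
        aE T ξ (res (z : ↥(limT T)).1 n) ≤ w ∧ w < bE T ξ (res z.1 n) := by
      intro z hz n
      refine ⟨Set.mem_iInter.mp hz.1 n, ?_⟩
      have := hz.2
      rw [Set.mem_iUnion] at this
      push_neg at this
      exact not_le.mp (this n)
    have h1 := hxW x hx (i+1)
    have h2 := hxW x' hx' (i+1)
    rcases lexLt_trichotomy (by rw [res_length, res_length]) hdiff with h | h
    · have := bE_le_aE_of_lexLt (ξ := ξ) hT (res_mem x (i+1)) (res_mem x' (i+1))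
        (by rw [res_length, res_length]) h
      exact absurd (h1.2.trans_le (this.trans h2.1)) (lt_irrefl w)
    · have := bE_le_aE_of_lexLt (ξ := ξ) hT (res_mem x' (i+1)) (res_mem x (i+1))
        (by rw [res_length, res_length]) h
      exact absurd (h2.2.trans_le (this.trans h1.1)) (lt_irrefl w)
  have hzero : lam ((⋂ n, W n) \ (⋃ n, U n)) = 0 := by
    rcases hsub.eq_empty_or_singleton with he | ⟨z, he⟩
    · rw [he]; exact measure_empty
    · rw [he]; exact lam_singleton hfree hcyl z
  have hWlam2 : w ≤ lam (⋂ n, W n) := by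
    rw [Directed.measure_iInter (fun n => (hWmeas n).nullMeasurableSet)
      hWanti.directed_ge ⟨0, measure_ne_top lam _⟩]
    exact le_iInf hWlam
  have hUlam2 : lam (⋃ n, U n) ≤ w := by
    rw [Directed.measure_iUnion hUmono.directed_le]
    exact iSup_le hUlam
  have hsand : lam (⋂ n, W n) ≤ lam (⋃ n, U n) := by
    calc lam (⋂ n, W n) ≤ lam (((⋂ n, W n) \ (⋃ n, U n)) ∪ (⋃ n, U n)) := by
          apply measure_mono
          intro z hz
          by_cases hzU : z ∈ ⋃ n, U n
          · exact Or.inr hzU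
          · exact Or.inl ⟨hz, hzU⟩
      _ ≤ lam ((⋂ n, W n) \ (⋃ n, U n)) + lam (⋃ n, U n) := measure_union_le _ _
      _ = lam (⋃ n, U n) := by rw [hzero, zero_add]
  have hle1 : lam (⋃ n, U n) ≤ lam (fXi T ξ ⁻¹' Set.Iic y) :=
    measure_mono (Set.iUnion_subset hUf)
  have hle2 : lam (fXi T ξ ⁻¹' Set.Iic y) ≤ lam (⋂ n, W n) :=
    measure_mono (Set.subset_iInter hfW)
  exact le_antisymm (hle2.trans (hsand.trans hUlam2)) (hWlam2.trans (hsand.trans hle1))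

lemma map_fXi (hT : IsTree T) (hpr : Pruned T) (hξ : IsIPM T ξ) (hfree : FreeIPM T ξ)
    [IsProbabilityMeasure lam] (hcyl : ∀ t ∈ T, lam (cyl T t) = ξ t) :
    Measure.map (fXi T ξ) lam = volume.restrict (Set.Icc (0:ℝ) 1) := by
  have hmeas : Measurable (fXi T ξ) := (continuous_fXi hT hpr hξ hfree).measurable
  have hprob : IsProbabilityMeasure (Measure.map (fXi T ξ) lam) :=
    Measure.isProbabilityMeasure_map hmeas.aemeasurable
  refine Measure.ext_of_Iic _ _ (fun a => ?_)
  rw [Measure.map_apply hmeas measurableSet_Iic, Measure.restrict_apply measurableSet_Iic]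
  rcases lt_or_ge a 0 with ha | ha
  · have h1 : fXi T ξ ⁻¹' Set.Iic a = ∅ := by
      apply Set.eq_empty_of_forall_notMem
      intro x hx
      exact absurd ((f_nonneg hT hpr hξ x).trans hx) (not_le.mpr ha)
    have h2 : Set.Iic a ∩ Set.Icc (0:ℝ) 1 = ∅ := by
      apply Set.eq_empty_of_forall_notMem
      rintro z ⟨hz1, hz2, -⟩
      rw [Set.mem_Iic] at hz1
      linarith
    rw [h1, h2, measure_empty, measure_empty]
  rcases le_or_gt a 1 with ha1 | ha1
  · rw [lam_preimage_Iic hT hpr hξ hfree hcyl ha ha1]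
    have h2 : Set.Iic a ∩ Set.Icc (0:ℝ) 1 = Set.Icc 0 a := by
      ext z
      simp only [Set.mem_inter_iff, Set.mem_Iic, Set.mem_Icc]
      constructor
      · rintro ⟨h1, h2, h3⟩; exact ⟨h2, h1⟩
      · rintro ⟨h1, h2⟩; exact ⟨h2, h1, h2.trans ha1⟩
    rw [h2, Real.volume_Icc, sub_zero]
  · have h1 : fXi T ξ ⁻¹' Set.Iic a = Set.univ := by
      apply Set.eq_univ_of_forall
      intro x
      exact Set.mem_Iic.mpr ((f_le_one hT hpr hξ x).trans ha1.le)
    have h2 : Set.Iic a ∩ Set.Icc (0:ℝ) 1 = Set.Icc 0 1 := by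
      ext z
      simp only [Set.mem_inter_iff, Set.mem_Iic, Set.mem_Icc]
      constructor
      · rintro ⟨h1, h2, h3⟩; exact ⟨h2, h3⟩
      · rintro ⟨h2, h3⟩; exact ⟨h3.trans ha1.le, h2, h3⟩
    rw [h1, h2, measure_univ, Real.volume_Icc, sub_zero, ENNReal.ofReal_one]

end Meas

section Main
variable {T : Set (List ℕ)} {ξ : List ℕ → ℝ≥0∞}

lemma countable_Qxi : (Qxi T ξ).Countable := by
  apply Set.Countable.union
  · have h : {y | ∃ t ∈ T, y = aT T ξ t} = (aT T ξ) '' T := by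
      ext y; simp [eq_comm, Set.mem_image]
    rw [h]
    exact (Set.to_countable T).image _
  · have h : {y | ∃ t ∈ T, y = bT T ξ t} = (bT T ξ) '' T := by
      ext y; simp [eq_comm, Set.mem_image]
    rw [h]
    exact (Set.to_countable T).image _

lemma bT_le_aT_of_lexLt (hT : IsTree T) (hpr : Pruned T) (hξ : IsIPM T ξ) {s t : List ℕ}
    (hs : s ∈ T) (ht : t ∈ T) (hlen : s.length = t.length) (hlt : lexLt s t) :
    bT T ξ s ≤ aT T ξ t := by
  rw [bT_eq hT hpr hξ hs, aT_eq]
  exact ENNReal.toReal_mono (aE_ne_top hT hpr hξ ht) (bE_le_aE_of_lexLt hT hs ht hlen hlt)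

lemma exists_branch (hT : IsTree T) (hpr : Pruned T) (hξ : IsIPM T ξ) (hfree : FreeIPM T ξ)
    {v : ℝ} (hv : v ∉ Qxi T ξ) (hv0 : 0 ≤ v) (hv1 : v ≤ 1) :
    ∃ x : ↥(limT T), fXi T ξ x = v := by
  classical
  set w := ENNReal.ofReal v with hwdef
  have hwtop : w ≠ ⊤ := ENNReal.ofReal_ne_top
  have hwv : w.toReal = v := ENNReal.toReal_ofReal hv0
  have hstep : ∀ t : List ℕ, t ∈ T ∧ aE T ξ t < w ∧ w < bE T ξ t →
      ∃ k, ((t ++ [k] ∈ T) ∧ aE T ξ (t ++ [k]) < w ∧ w < bE T ξ (t ++ [k])) := by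
    rintro t ⟨ht, h1, h2⟩
    obtain ⟨k, hk, hk1, hk2⟩ := exists_straddling_child hT hpr hξ ht h1 h2
    refine ⟨k, hk, lt_of_le_of_ne hk1 (fun he => ?_), lt_of_le_of_ne hk2 (fun he => ?_)⟩
    · exact hv (Or.inl ⟨t ++ [k], hk, by rw [aT_eq, he, hwv]⟩)
    · exact hv (Or.inr ⟨t ++ [k], hk, by rw [bT_eq hT hpr hξ hk, ← he, hwv]⟩)
  have hbase : ([] : List ℕ) ∈ T ∧ aE T ξ [] < w ∧ w < bE T ξ [] := by
    refine ⟨nil_mem hT, ?_, ?_⟩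
    · rw [aE_nil]
      have hvne : v ≠ 0 := fun h => hv (Or.inl ⟨[], nil_mem hT, by rw [h, aT_nil]⟩)
      exact ENNReal.ofReal_pos.mpr (lt_of_le_of_ne hv0 (Ne.symm hvne))
    · rw [bE_nil hξ]
      have hvne : v ≠ 1 := fun h => hv (Or.inr ⟨[], nil_mem hT, by
        rw [h, bT_eq hT hpr hξ (nil_mem hT), bE_nil hξ, ENNReal.toReal_one]⟩)
      exact ENNReal.ofReal_lt_one.mpr (lt_of_le_of_ne hv1 hvne)
  choose K hK using hstep
  let seq : ℕ → {t : List ℕ // t ∈ T ∧ aE T ξ t < w ∧ w < bE T ξ t} := fun n =>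
    Nat.rec ⟨[], hbase⟩ (fun _ p => ⟨p.1 ++ [K p.1 p.2], hK p.1 p.2⟩) n
  have hseq_succ : ∀ n, (seq (n+1)).1 = (seq n).1 ++ [K (seq n).1 (seq n).2] := fun n => rfl
  have hseq_len : ∀ n, (seq n).1.length = n := by
    intro n
    induction n with
    | zero => rfl
    | succ n ih => rw [hseq_succ, List.length_append, ih]; rfl
  set x : ℕ → ℕ := fun n => (seq (n+1)).1.getD n 0 with hxdef
  have hxn : ∀ n, x n = K (seq n).1 (seq n).2 := by
    intro n
    show (seq (n+1)).1.getD n 0 = _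
    rw [hseq_succ]
    exact getD_app (hseq_len n)
  have hres : ∀ n, res x n = (seq n).1 := by
    intro n
    induction n with
    | zero => rfl
    | succ n ih => rw [res_succ, ih, hxn n, hseq_succ]
  have hxlim : x ∈ limT T := by
    intro n
    have h : res x n ∈ T := (hres n) ▸ (seq n).2.1
    exact h
  refine ⟨⟨x, hxlim⟩, ?_⟩
  set X : ↥(limT T) := ⟨x, hxlim⟩ with hXdef
  have hresX : ∀ n, res X.1 n = (seq n).1 := hres
  have hlow : ∀ n, aT T ξ (res X.1 n) ≤ v := by
    intro n
    rw [aT_eq, ← hwv]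
    refine ENNReal.toReal_mono hwtop ?_
    rw [hresX n]
    exact (seq n).2.2.1.le
  have hfle : fXi T ξ X ≤ v := by rw [fXi_eq]; exact ciSup_le hlow
  have hvle : v ≤ fXi T ξ X := by
    have hub : ∀ n, v - fXi T ξ X ≤ (ξ (res X.1 n)).toReal := by
      intro n
      have h1 : v ≤ bT T ξ (res X.1 n) := by
        rw [← hwv, bT_eq hT hpr hξ (res_mem X n)]
        refine ENNReal.toReal_mono (bE_ne_top hT hpr hξ (res_mem X n)) ?_
        rw [hresX n]
        exact ((seq n).2.2.2).le
      have h2 : aT T ξ (res X.1 n) ≤ fXi T ξ X := aT_le_f hT hpr hξ X n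
      have h3 : bT T ξ (res X.1 n) = aT T ξ (res X.1 n) + (ξ (res X.1 n)).toReal := rfl
      linarith
    have h0 := ge_of_tendsto (xi_res_toReal_tendsto hpr hξ hfree X)
      (Filter.Eventually.of_forall hub)
    linarith
  exact le_antisymm hfle hvle

end Main

end Aux

theorem stmt16 (T : Set (List ℕ)) (ξ : List ℕ → ℝ≥0∞)
    (hT : IsTree T) (hpr : Pruned T) (hξ : IsIPM T ξ) (hfree : FreeIPM T ξ)
    (lam : Measure ↥(limT T)) (hlam : IsProbabilityMeasure lam)
    (hcyl : ∀ t ∈ T, lam (cyl T t) = ξ t) :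
    ∀ B : Set ℝ, B ⊆ Set.Icc (0 : ℝ) 1 →
      ((MeasurableSet B ↔ MeasurableSet (fXi T ξ ⁻¹' B)) ∧
        (MeasurableSet B → lam (fXi T ξ ⁻¹' B) = volume B)) := by
  intro B hB
  haveI := hlam
  have hmeas : Measurable (fXi T ξ) := (Aux.continuous_fXi hT hpr hξ hfree).measurable
  refine ⟨⟨fun h => hmeas h, fun hpre => ?_⟩, fun hBmeas => ?_⟩
  · haveI : PolishSpace ↥(limT T) := (Aux.isClosed_limT hT).polishSpace
    have hQc : (Qxi T ξ).Countable := Aux.countable_Qxi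
    have hQm : MeasurableSet (Qxi T ξ) := hQc.measurableSet
    set S := fXi T ξ ⁻¹' B \ fXi T ξ ⁻¹' (Qxi T ξ) with hSdef
    have hSm : MeasurableSet S := hpre.diff (hmeas hQm)
    have hinj : Set.InjOn (fXi T ξ) S := by
      intro p hp q hq hpq
      by_contra hne
      have hdi : ∃ i, p.1 i ≠ q.1 i := by
        by_contra h
        push_neg at h
        exact hne (Subtype.ext (funext h))
      obtain ⟨i, hi⟩ := hdi
      have hdiff : Aux.res p.1 (i+1) ≠ Aux.res q.1 (i+1) :=
        fun he => hi (Aux.res_eq_res_iff.mp he i (by omega))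
      have hlen : (Aux.res p.1 (i+1)).length = (Aux.res q.1 (i+1)).length := by
        rw [Aux.res_length, Aux.res_length]
      have hQp : fXi T ξ p ∉ Qxi T ξ := hp.2
      rcases Aux.lexLt_trichotomy hlen hdiff with h | h
      · have hba := Aux.bT_le_aT_of_lexLt hT hpr hξ (Aux.res_mem p (i+1))
          (Aux.res_mem q (i+1)) hlen h
        have h1 : fXi T ξ p ≤ bT T ξ (Aux.res p.1 (i+1)) := Aux.f_le_bT hT hpr hξ p (i+1)
        have h2 : aT T ξ (Aux.res q.1 (i+1)) ≤ fXi T ξ q := Aux.aT_le_f hT hpr hξ q (i+1)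
        have heq : fXi T ξ p = aT T ξ (Aux.res q.1 (i+1)) :=
          le_antisymm (h1.trans hba) (by rw [hpq]; exact h2)
        exact hQp (Or.inl ⟨Aux.res q.1 (i+1), Aux.res_mem q (i+1), heq⟩)
      · have hba := Aux.bT_le_aT_of_lexLt hT hpr hξ (Aux.res_mem q (i+1))
          (Aux.res_mem p (i+1)) hlen.symm h
        have h1 : fXi T ξ q ≤ bT T ξ (Aux.res q.1 (i+1)) := Aux.f_le_bT hT hpr hξ q (i+1)
        have h2 : aT T ξ (Aux.res p.1 (i+1)) ≤ fXi T ξ p := Aux.aT_le_f hT hpr hξ p (i+1)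
        have heq : fXi T ξ p = aT T ξ (Aux.res p.1 (i+1)) :=
          le_antisymm (by rw [hpq]; exact h1.trans hba) h2
        exact hQp (Or.inl ⟨Aux.res p.1 (i+1), Aux.res_mem p (i+1), heq⟩)
    have himg : MeasurableSet (fXi T ξ '' S) :=
      hSm.image_of_continuousOn_injOn
        ((Aux.continuous_fXi hT hpr hξ hfree).continuousOn) hinj
    have hBeq : B = (B ∩ Qxi T ξ) ∪ fXi T ξ '' S := by
      ext v
      constructor
      · intro hvB
        by_cases hvQ : v ∈ Qxi T ξ
        · exact Or.inl ⟨hvB, hvQ⟩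
        · right
          obtain ⟨x, hx⟩ := Aux.exists_branch hT hpr hξ hfree hvQ (hB hvB).1 (hB hvB).2
          refine ⟨x, ⟨?_, ?_⟩, hx⟩
          · show fXi T ξ x ∈ B
            rw [hx]; exact hvB
          · intro hc
            exact hvQ (hx ▸ hc)
      · rintro (⟨h, -⟩ | ⟨x, hxS, rfl⟩)
        · exact h
        · exact hxS.1
    rw [hBeq]
    exact ((hQc.mono Set.inter_subset_right).measurableSet).union himg
  · have hmap := Aux.map_fXi hT hpr hξ hfree hcyl
    rw [← Measure.map_apply hmeas hBmeas, hmap, Measure.restrict_apply hBmeas,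
      Set.inter_eq_self_of_subset_left hB]
end
end

section
/- Let T be a pruned tree of sequences and λ a Borel probability measure on lim T such that λ({x}) = 0 for every x ∈ lim T, and let Leb denote Lebesgue measure on [0,1]. Then the null ideals N(λ) and N(Leb) are Tukey equivalent, and so are the associated covering systems; explicitly: (1) there exist maps F : N(λ) → N(Leb) and G : N(Leb) → N(λ) such that for all A ∈ N(λ) and B ∈ N(Leb), F(A) ⊆ B implies A ⊆ G(B); (2) there exist maps F' : N(Leb) → N(λ) and G' : N(λ) → N(Leb) such that for all B ∈ N(Leb) and A ∈ N(λ), F'(B) ⊆ A implies B ⊆ G'(A); (3) there exist maps φ : lim T → [0,1] and H : N(Leb) → N(λ) such that for all x ∈ lim T and B ∈ N(Leb), φ(x) ∈ B implies x ∈ H(B); (4) there exist maps ψ : [0,1] → lim T and K : N(λ) → N(Leb) such that for all y ∈ [0,1] and A ∈ N(λ), ψ(y) ∈ A implies y ∈ K(A). -/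
open scoped ENNReal
open MeasureTheory

noncomputable section

/-- The null ideal of a (Borel) measure: sets covered by a measurable set of measure zero. -/
def NullIdeal {Z : Type*} [MeasurableSpace Z] (ν : Measure Z) : Set (Set Z) :=
  {A | ∃ N : Set Z, A ⊆ N ∧ MeasurableSet N ∧ ν N = 0}

/-- Lebesgue measure on the unit interval `[0,1]`. -/
def LebI : Measure ↥(Set.Icc (0 : ℝ) 1) :=
  Measure.comap Subtype.val volume


section AuxReal
open Set Filter Topology ProbabilityTheory
set_option linter.unusedSectionVars false

variable {μ : Measure ℝ} [IsProbabilityMeasure μ] [NullSingletonClass μ]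

lemma cdf_continuous : Continuous (cdf μ) := by
  rw [continuous_iff_continuousAt]
  intro a
  have hmono : Monotone (cdf μ) := monotone_cdf μ
  have hL : Function.leftLim (cdf μ) a = cdf μ a := by
    have h0 : (cdf μ).measure {a} = 0 := by rw [measure_cdf]; exact measure_singleton a
    rw [StieltjesFunction.measure_singleton] at h0
    have h1 : cdf μ a - Function.leftLim (cdf μ) a ≤ 0 := ENNReal.ofReal_eq_zero.1 h0
    have h2 : Function.leftLim (cdf μ) a ≤ cdf μ a := hmono.leftLim_le le_rfl
    linarith
  refine continuousAt_iff_continuous_left'_right'.2 ⟨?_, ?_⟩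
  · exact hmono.continuousWithinAt_Iio_iff_leftLim_eq.2 hL
  · exact ((cdf μ).right_continuous a).mono Ioi_subset_Ici_self

variable (hs : μ (Set.Ioo (0:ℝ) 1)ᶜ = 0)
include hs

lemma cdf_of_nonpos {x : ℝ} (hx : x ≤ 0) : cdf μ x = 0 := by
  rw [cdf_eq_real, measureReal_def]
  have : μ (Iic x) = 0 := by
    refine measure_mono_null (fun t ht => ?_) hs
    simp only [mem_compl_iff, mem_Ioo, not_and, not_lt]
    intro h
    exact absurd (le_trans (mem_Iic.1 ht) hx) (not_le.2 h)
  simp [this]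

lemma cdf_of_one_le {x : ℝ} (hx : (1:ℝ) ≤ x) : cdf μ x = 1 := by
  rw [cdf_eq_real, measureReal_def]
  have h1 : μ (Iic x) = 1 := by
    refine le_antisymm prob_le_one ?_
    calc (1:ℝ≥0∞) = μ (Set.Ioo 0 1) := by
          have h2 := prob_compl_eq_zero_iff (μ := μ) (s := Set.Ioo (0:ℝ) 1) measurableSet_Ioo
          exact (h2.1 hs).symm
      _ ≤ μ (Iic x) := measure_mono (fun t ht => le_trans ht.2.le hx)
  simp [h1]

lemma cdf_map_eq : Measure.map (cdf μ) μ = volume.restrict (Set.Icc (0:ℝ) 1) := by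
  have hcont : Continuous (cdf μ) := cdf_continuous
  have hmono : Monotone (cdf μ) := monotone_cdf μ
  have hfin : IsFiniteMeasure (volume.restrict (Set.Icc (0:ℝ) 1)) := by
    constructor
    rw [Measure.restrict_apply_univ, Real.volume_Icc]
    simp
  have hprob : IsProbabilityMeasure (Measure.map (cdf μ) μ) :=
    Measure.isProbabilityMeasure_map hcont.measurable.aemeasurable
  have hmap : IsFiniteMeasure (Measure.map (cdf μ) μ) := inferInstance
  refine Measure.ext_of_Iic _ _ (fun a => ?_)
  rw [Measure.map_apply hcont.measurable measurableSet_Iic,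
    Measure.restrict_apply measurableSet_Iic]
  rcases lt_or_ge a 0 with ha | ha
  · have h1 : (cdf μ) ⁻¹' Iic a = ∅ := by
      ext x
      simp only [mem_preimage, mem_Iic, mem_empty_iff_false, iff_false, not_le]
      exact lt_of_lt_of_le ha (cdf_nonneg μ x)
    have h2 : Iic a ∩ Set.Icc (0:ℝ) 1 = ∅ := by
      ext x
      simp only [mem_inter_iff, mem_Iic, mem_Icc, mem_empty_iff_false, iff_false]
      rintro ⟨h, h0, -⟩
      linarith
    rw [h1, h2]
    simp
  rcases le_or_gt 1 a with ha1 | ha1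
  · have h1 : (cdf μ) ⁻¹' Iic a = univ := by
      ext x
      simp only [mem_preimage, mem_Iic, mem_univ, iff_true]
      exact le_trans (cdf_le_one μ x) ha1
    have h2 : Iic a ∩ Set.Icc (0:ℝ) 1 = Set.Icc 0 1 := by
      refine inter_eq_self_of_subset_right (fun x hx => le_trans hx.2 ha1)
    rw [h1, h2, Real.volume_Icc, measure_univ]
    simp
  · -- 0 ≤ a < 1
    set S : Set ℝ := {x | cdf μ x ≤ a} with hS
    have hpre : (cdf μ) ⁻¹' Iic a = S := rfl
    have hSc : IsClosed S := isClosed_le hcont continuous_const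
    have h0S : (0:ℝ) ∈ S := by
      simp only [hS, mem_setOf_eq]
      rw [cdf_of_nonpos hs le_rfl]; exact ha
    have hbdd : BddAbove S := by
      refine ⟨1, fun x hx => ?_⟩
      by_contra h
      push_neg at h
      have : cdf μ x = 1 := cdf_of_one_le hs h.le
      rw [mem_setOf_eq, this] at hx
      linarith
    set u := sSup S with hu
    have huS : u ∈ S := hSc.csSup_mem ⟨0, h0S⟩ hbdd
    have hSu : S = Iic u := by
      ext x
      constructor
      · intro hx; exact le_csSup hbdd hx
      · intro hx; exact le_trans (hmono hx) huS
    have hcu : cdf μ u = a := by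
      refine le_antisymm huS ?_
      by_contra h
      push_neg at h
      have hev : ∀ᶠ t in 𝓝 u, cdf μ t < a :=
        (hcont.continuousAt (x := u)).eventually_lt continuousAt_const h
      obtain ⟨t, hta, htu⟩ :=
        ((hev.filter_mono (nhdsWithin_le_nhds (s := Ioi u))).and
          (eventually_mem_nhdsWithin (s := Ioi u))).exists
      have : t ∈ S := hta.le
      rw [hSu] at this
      exact absurd (mem_Ioi.1 htu) (not_lt.2 this)
    rw [hpre, hSu]
    have hμIic : μ (Iic u) = ENNReal.ofReal (cdf μ u) := by
      conv_lhs => rw [← measure_cdf (μ := μ)]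
      rw [StieltjesFunction.measure_Iic _ (tendsto_cdf_atBot μ)]
      simp
    have h2 : Iic a ∩ Set.Icc (0:ℝ) 1 = Set.Icc 0 a := by
      ext x
      simp only [mem_inter_iff, mem_Iic, mem_Icc]
      constructor
      · rintro ⟨h1, h2, h3⟩; exact ⟨h2, h1⟩
      · rintro ⟨h1, h2⟩; exact ⟨h2, h1, le_trans h2 ha1.le⟩
    rw [hμIic, hcu, h2, Real.volume_Icc]
    simp

lemma cdf_fiber_null (v : ℝ) : μ ((cdf μ) ⁻¹' {v}) = 0 := by
  have h := cdf_map_eq hs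
  have : μ ((cdf μ) ⁻¹' {v}) = (Measure.map (cdf μ) μ) {v} := by
    rw [Measure.map_apply (cdf_continuous).measurable (measurableSet_singleton v)]
  rw [this, h, Measure.restrict_apply (measurableSet_singleton v)]
  exact measure_mono_null inter_subset_left (Real.volume_singleton)

omit hs in
/-- The quantile function. -/
def qtl (μ : Measure ℝ) : ℝ → ℝ := fun a => sInf {x | min a 1 ≤ cdf μ x}

lemma qtl_nonneg_aux {a x : ℝ} (ha : 0 < min a 1) (hx : x ∈ {x | min a 1 ≤ cdf μ x}) :
    0 ≤ x := by
  by_contra h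
  push_neg at h
  rw [mem_setOf_eq, cdf_of_nonpos hs h.le] at hx
  linarith

lemma qtl_set_nonempty (a : ℝ) : {x | min a 1 ≤ cdf μ x}.Nonempty :=
  ⟨1, by rw [mem_setOf_eq, cdf_of_one_le hs le_rfl]; exact min_le_right a 1⟩

lemma qtl_mono : Monotone (qtl μ) := by
  intro a b hab
  simp only [qtl]
  rcases le_or_gt (min a 1) 0 with ha | ha
  · have h1 : ¬ BddBelow {x | min a 1 ≤ cdf μ x} := by
      intro ⟨L, hL⟩
      have : (min L (-1) - 1) ∈ {x | min a 1 ≤ cdf μ x} := by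
        rw [mem_setOf_eq, cdf_of_nonpos hs (by
          have := min_le_right L (-1); linarith)]
        exact ha
      have := hL this
      have := min_le_left L (-1); linarith
    have h2 : qtl μ a = 0 := Real.sInf_of_not_bddBelow h1
    rcases le_or_gt (min b 1) 0 with hb | hb
    · have h1b : ¬ BddBelow {x | min b 1 ≤ cdf μ x} := by
        intro ⟨L, hL⟩
        have : (min L (-1) - 1) ∈ {x | min b 1 ≤ cdf μ x} := by
          rw [mem_setOf_eq, cdf_of_nonpos hs (by
            have := min_le_right L (-1); linarith)]
          exact hb
        have := hL this
        have := min_le_left L (-1); linarith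
      rw [Real.sInf_of_not_bddBelow h1, Real.sInf_of_not_bddBelow h1b]
    · rw [Real.sInf_of_not_bddBelow h1]
      exact le_csInf (qtl_set_nonempty hs b) (fun x hx => qtl_nonneg_aux hs hb hx)
  · have hb : 0 < min b 1 := lt_of_lt_of_le ha (by
      rcases le_total a b with h | h
      · exact min_le_min h le_rfl
      · exact min_le_min (le_trans hab le_rfl) le_rfl)
    refine csInf_le_csInf ⟨0, fun x hx => qtl_nonneg_aux hs ha hx⟩
      (qtl_set_nonempty hs b) (fun x hx => ?_)
    exact le_trans (min_le_min hab le_rfl) hx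

lemma qtl_measurable : Measurable (qtl μ) := (qtl_mono hs).measurable

lemma cdf_qtl {a : ℝ} (ha : a ∈ Set.Ioo (0:ℝ) 1) : cdf μ (qtl μ a) = a := by
  have hmin : min a 1 = a := min_eq_left ha.2.le
  have hSne : {x | min a 1 ≤ cdf μ x}.Nonempty := qtl_set_nonempty hs a
  have hbdd : BddBelow {x | min a 1 ≤ cdf μ x} :=
    ⟨0, fun x hx => qtl_nonneg_aux hs (by rw [hmin]; exact ha.1) hx⟩
  have hcl : IsClosed {x | min a 1 ≤ cdf μ x} :=
    isClosed_le continuous_const cdf_continuous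
  have hmem : qtl μ a ∈ {x | min a 1 ≤ cdf μ x} := hcl.csInf_mem hSne hbdd
  rw [mem_setOf_eq, hmin] at hmem
  refine le_antisymm ?_ hmem
  by_contra h
  push_neg at h
  have hev : ∀ᶠ t in 𝓝 (qtl μ a), a < cdf μ t :=
    ContinuousAt.eventually_lt continuousAt_const (cdf_continuous.continuousAt (x := qtl μ a)) h
  obtain ⟨t, hta, htu⟩ :=
    ((hev.filter_mono (nhdsWithin_le_nhds (s := Iio (qtl μ a)))).and
      (eventually_mem_nhdsWithin (s := Iio (qtl μ a)))).exists
  have : t ∈ {x | min a 1 ≤ cdf μ x} := by rw [mem_setOf_eq, hmin]; exact hta.le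
  exact absurd (mem_Iio.1 htu) (not_lt.2 (csInf_le hbdd this))

omit hs in
/-- The set of "bad" points where the quantile of the cdf may differ from the point. -/
def badSet (μ : Measure ℝ) : Set ℝ :=
  (cdf μ) ⁻¹' {0} ∪ (cdf μ) ⁻¹' {1} ∪ ⋃ (s : ℚ), (Ioi (s:ℝ) ∩ (cdf μ) ⁻¹' {cdf μ s})

omit hs in
lemma badSet_measurable : MeasurableSet (badSet μ) := by
  have hm : Measurable (cdf μ) := (cdf_continuous (μ := μ)).measurable
  exact ((hm (measurableSet_singleton _)).union (hm (measurableSet_singleton _))).union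
    (MeasurableSet.iUnion (fun s => measurableSet_Ioi.inter (hm (measurableSet_singleton _))))

lemma badSet_null : μ (badSet μ) = 0 := by
  refine measure_union_null (measure_union_null (cdf_fiber_null hs 0) (cdf_fiber_null hs 1)) ?_
  exact measure_iUnion_null (fun s => measure_mono_null inter_subset_right (cdf_fiber_null hs _))

lemma qtl_cdf_of_not_mem {x : ℝ} (hx : x ∉ badSet μ) : qtl μ (cdf μ x) = x := by
  simp only [badSet, mem_union, mem_preimage, mem_singleton_iff, mem_iUnion, not_or,
    not_exists] at hx
  obtain ⟨⟨h0, h1⟩, hQ⟩ := hx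
  have hx01 : cdf μ x ∈ Set.Ioo (0:ℝ) 1 := by
    constructor
    · exact lt_of_le_of_ne (cdf_nonneg μ x) (Ne.symm h0)
    · exact lt_of_le_of_ne (cdf_le_one μ x) h1
  have hmin : min (cdf μ x) 1 = cdf μ x := min_eq_left hx01.2.le
  set a := cdf μ x with hadef
  have hbdd : BddBelow {t | min a 1 ≤ cdf μ t} :=
    ⟨0, fun t ht => qtl_nonneg_aux hs (by rw [hmin]; exact hx01.1) ht⟩
  have hSne : {t | min a 1 ≤ cdf μ t}.Nonempty := qtl_set_nonempty hs a
  have hcl : IsClosed {t | min a 1 ≤ cdf μ t} := isClosed_le continuous_const cdf_continuous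
  have hmem : x ∈ {t | min a 1 ≤ cdf μ t} := by rw [mem_setOf_eq, hmin]
  have hle : qtl μ a ≤ x := csInf_le hbdd hmem
  rcases eq_or_lt_of_le hle with h | h
  · exact h
  · exfalso
    set m := qtl μ a with hm
    have hmS : m ∈ {t | min a 1 ≤ cdf μ t} := hcl.csInf_mem hSne hbdd
    rw [mem_setOf_eq, hmin] at hmS
    have hcm : cdf μ m = a := le_antisymm (monotone_cdf μ h.le) hmS
    obtain ⟨s, hms, hsx⟩ := exists_rat_btwn h
    have h1' : cdf μ (s:ℝ) ≤ a := by rw [hadef]; exact monotone_cdf μ hsx.le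
    have h2 : a ≤ cdf μ (s:ℝ) := by rw [← hcm]; exact monotone_cdf μ hms.le
    exact hQ s ⟨mem_Ioi.2 hsx, by rw [mem_preimage, mem_singleton_iff, ← hadef]; linarith⟩

end AuxReal

open Set Filter Topology in
lemma mem_nullIdeal_iff {Z : Type*} [MeasurableSpace Z] (ν : Measure Z) (A : Set Z) :
    A ∈ NullIdeal ν ↔ ν A = 0 := by
  constructor
  · rintro ⟨N, hAN, -, hN⟩
    exact le_antisymm (hN ▸ measure_mono hAN) zero_le
  · intro h
    exact ⟨toMeasurable ν A, subset_toMeasurable ν A, measurableSet_toMeasurable ν A,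
      by rw [measure_toMeasurable, h]⟩

open Set Filter Topology in
lemma limT_closed (T : Set (List ℕ)) : IsClosed (limT T) := by
  rw [← isOpen_compl_iff]
  rw [isOpen_iff_mem_nhds]
  intro x hx
  simp only [mem_compl_iff, limT, mem_setOf_eq, not_forall] at hx
  obtain ⟨n, hn⟩ := hx
  have : {y : ℕ → ℕ | ∀ i < n, y i = x i} ∈ 𝓝 x := by
    have : {y : ℕ → ℕ | ∀ i < n, y i = x i} = Set.pi (Finset.range n : Set ℕ) (fun i => {x i}) := by
      ext y
      simp [Set.mem_pi]
    rw [this]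
    exact set_pi_mem_nhds (Finset.range n).finite_toSet (fun i _ => by
      simp only [mem_nhds_iff]
      exact ⟨{x i}, subset_rfl, isOpen_discrete _, rfl⟩)
  refine Filter.mem_of_superset this (fun y hy => ?_)
  simp only [mem_compl_iff, limT, mem_setOf_eq, not_forall]
  refine ⟨n, ?_⟩
  have : (List.range n).map y = (List.range n).map x := by
    apply List.map_congr_left
    intro i hi
    exact hy i (List.mem_range.1 hi)
  rw [this]
  exact hn

def branchSeq (T : Set (List ℕ)) (hT : IsTree T) (hpr : Pruned T) : ℕ → {t : List ℕ // t ∈ T}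
  | 0 => ⟨[], hT.2 [] hT.1.choose (List.nil_prefix) hT.1.choose_spec⟩
  | n + 1 =>
    let p := branchSeq T hT hpr n
    ⟨p.1 ++ [(hpr p.1 p.2).choose], (hpr p.1 p.2).choose_spec⟩

lemma branchSeq_length (T : Set (List ℕ)) (hT : IsTree T) (hpr : Pruned T) (n : ℕ) :
    (branchSeq T hT hpr n).1.length = n := by
  induction n with
  | zero => rfl
  | succ n ih => simp [branchSeq, ih]

lemma limT_nonempty (T : Set (List ℕ)) (hT : IsTree T) (hpr : Pruned T) :
    Nonempty ↥(limT T) := by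
  set b := branchSeq T hT hpr with hb
  set x : ℕ → ℕ := fun n => (b (n+1)).1.getD n 0 with hx
  have key : ∀ n, (List.range n).map x = (b n).1 := by
    intro n
    induction n with
    | zero => simp [branchSeq, hb]
    | succ n ih =>
      rw [List.range_succ, List.map_append, ih]
      have hlen : (b n).1.length = n := branchSeq_length T hT hpr n
      have : (b (n+1)).1 = (b n).1 ++ [(hpr (b n).1 (b n).2).choose] := rfl
      simp only [List.map_cons, List.map_nil]
      rw [show x n = (b (n+1)).1.getD n 0 from rfl, this]
      have hget : ∀ (l : List ℕ) (c : ℕ), (l ++ [c]).getD l.length 0 = c := by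
        intro l c
        rw [List.getD_append_right _ _ _ _ le_rfl]
        simp
      have h2 := hget (b n).1 ((hpr (b n).1 (b n).2).choose)
      rw [hlen] at h2
      rw [h2]
  exact ⟨⟨x, fun n => (key n) ▸ (b n).2⟩⟩


theorem stmt17 (T : Set (List ℕ)) (hT : IsTree T) (hpr : Pruned T)
    (lam : Measure ↥(limT T)) (hlam : IsProbabilityMeasure lam)
    (hfree : ∀ x : ↥(limT T), lam {x} = 0) :
    (∃ F : ↥(NullIdeal lam) → ↥(NullIdeal LebI),
      ∃ G : ↥(NullIdeal LebI) → ↥(NullIdeal lam),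
        ∀ (A : ↥(NullIdeal lam)) (B : ↥(NullIdeal LebI)),
          (F A).1 ⊆ B.1 → A.1 ⊆ (G B).1) ∧
    (∃ F' : ↥(NullIdeal LebI) → ↥(NullIdeal lam),
      ∃ G' : ↥(NullIdeal lam) → ↥(NullIdeal LebI),
        ∀ (B : ↥(NullIdeal LebI)) (A : ↥(NullIdeal lam)),
          (F' B).1 ⊆ A.1 → B.1 ⊆ (G' A).1) ∧
    (∃ φ : ↥(limT T) → ↥(Set.Icc (0 : ℝ) 1),
      ∃ H : ↥(NullIdeal LebI) → ↥(NullIdeal lam),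
        ∀ (x : ↥(limT T)) (B : ↥(NullIdeal LebI)),
          φ x ∈ B.1 → x ∈ (H B).1) ∧
    (∃ ψ : ↥(Set.Icc (0 : ℝ) 1) → ↥(limT T),
      ∃ K : ↥(NullIdeal lam) → ↥(NullIdeal LebI),
        ∀ (y : ↥(Set.Icc (0 : ℝ) 1)) (A : ↥(NullIdeal lam)),
          ψ y ∈ A.1 → y ∈ (K A).1) := by
  classical
  have hclosed : IsClosed (limT T) := limT_closed T
  haveI : PolishSpace ↥(limT T) := hclosed.polishSpace
  haveI hne : Nonempty ↥(limT T) := limT_nonempty T hT hpr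
  haveI : NullSingletonClass lam := ⟨hfree⟩
  obtain ⟨e0, he0⟩ := MeasureTheory.exists_measurableEmbedding_real ↥(limT T)
  set hfun : ℝ → ℝ := fun t => Real.arctan t / Real.pi + 1/2 with hhfun
  have hcont : Continuous hfun := (Real.continuous_arctan.div_const _).add continuous_const
  have hinj : Function.Injective hfun := by
    intro a b hab
    apply Real.arctan_injective
    simp only [hhfun] at hab
    have h1 : Real.arctan a / Real.pi = Real.arctan b / Real.pi := by linarith
    field_simp [Real.pi_ne_zero] at h1
    exact h1
  set emb : ↥(limT T) → ℝ := hfun ∘ e0 with hembdef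
  have hemb : MeasurableEmbedding emb := (hcont.measurableEmbedding hinj).comp he0
  have hrange : ∀ z : ↥(limT T), emb z ∈ Set.Ioo (0:ℝ) 1 := by
    intro z
    have h1 := Real.arctan_lt_pi_div_two (e0 z)
    have h2 := Real.neg_pi_div_two_lt_arctan (e0 z)
    have hpi := Real.pi_pos
    have h3 : Real.arctan (e0 z) / Real.pi < 1/2 := by
      rw [div_lt_iff₀ hpi]; linarith
    have h4 : -(1/2 : ℝ) < Real.arctan (e0 z) / Real.pi := by
      rw [lt_div_iff₀ hpi]; linarith
    constructor
    · show 0 < Real.arctan (e0 z) / Real.pi + 1/2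
      linarith
    · show Real.arctan (e0 z) / Real.pi + 1/2 < 1
      linarith
  set μ := Measure.map emb lam with hμ
  haveI : IsProbabilityMeasure μ := Measure.isProbabilityMeasure_map hemb.measurable.aemeasurable
  haveI : NullSingletonClass μ := by
    constructor
    intro r
    rw [hμ, hemb.map_apply]
    rcases Set.eq_empty_or_nonempty (emb ⁻¹' {r}) with h | ⟨x, hx⟩
    · rw [h]; exact measure_empty
    · refine measure_mono_null (fun y hy => ?_) (hfree x)
      have : emb y = emb x := by
        rw [Set.mem_preimage, Set.mem_singleton_iff] at hy hx
        rw [hy, hx]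
      exact hemb.injective this
  have hs : μ (Set.Ioo (0:ℝ) 1)ᶜ = 0 := by
    rw [hμ, hemb.map_apply]
    have : emb ⁻¹' (Set.Ioo (0:ℝ) 1)ᶜ = ∅ := by
      ext z
      simp only [Set.mem_preimage, Set.mem_compl_iff, Set.mem_empty_iff_false, iff_false, not_not]
      exact hrange z
    rw [this]
    exact measure_empty
  set cdf' : ℝ → ↥(Set.Icc (0:ℝ) 1) :=
    fun x => ⟨ProbabilityTheory.cdf μ x,
      Set.mem_Icc.2 ⟨ProbabilityTheory.cdf_nonneg μ x, ProbabilityTheory.cdf_le_one μ x⟩⟩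
    with hcdfdef
  have hmcdf' : Measurable cdf' := (cdf_continuous (μ := μ)).measurable.subtype_mk
  have hval : MeasurableEmbedding (Subtype.val : ↥(Set.Icc (0:ℝ) 1) → ℝ) :=
    MeasurableEmbedding.subtype_coe measurableSet_Icc
  have hcdfmap : Measure.map cdf' μ = LebI := by
    refine Measure.ext (fun M hM => ?_)
    rw [Measure.map_apply hmcdf' hM]
    have h1 : LebI M = volume (Subtype.val '' M) := by
      rw [LebI]; exact hval.comap_apply volume M
    have h2 : cdf' ⁻¹' M = (ProbabilityTheory.cdf μ) ⁻¹' (Subtype.val '' M) := by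
      ext x
      simp only [Set.mem_preimage]
      constructor
      · intro h; exact ⟨cdf' x, h, rfl⟩
      · rintro ⟨y, hy, hyx⟩
        have : y = cdf' x := Subtype.ext hyx
        rwa [this] at hy
    rw [h2, ← Measure.map_apply (cdf_continuous (μ := μ)).measurable (hval.measurableSet_image' hM)]
    rw [cdf_map_eq hs, Measure.restrict_apply (hval.measurableSet_image' hM)]
    rw [Set.inter_eq_self_of_subset_left (by rintro r ⟨y, hy, rfl⟩; exact y.2)]
    rw [h1]
  have key1 : ∀ M : Set ↥(Set.Icc (0:ℝ) 1), MeasurableSet M → LebI M = μ (cdf' ⁻¹' M) := by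
    intro M hM
    rw [← hcdfmap, Measure.map_apply hmcdf' hM]
  set φ : ↥(limT T) → ↥(Set.Icc (0:ℝ) 1) := fun x => cdf' (emb x) with hφ
  have lem1 : ∀ S : Set ↥(Set.Icc (0:ℝ) 1), lam (φ ⁻¹' S) ≤ LebI S := by
    intro S
    have hMm : MeasurableSet (toMeasurable LebI S) := measurableSet_toMeasurable _ _
    calc lam (φ ⁻¹' S) ≤ lam (φ ⁻¹' (toMeasurable LebI S)) :=
          measure_mono (Set.preimage_mono (subset_toMeasurable _ _))
      _ = lam (emb ⁻¹' (cdf' ⁻¹' (toMeasurable LebI S))) := rfl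
      _ = μ (cdf' ⁻¹' (toMeasurable LebI S)) := by
          rw [hμ, Measure.map_apply hemb.measurable (hmcdf' hMm)]
      _ = LebI (toMeasurable LebI S) := (key1 _ hMm).symm
      _ = LebI S := measure_toMeasurable S
  have lem1' : ∀ S : Set ↥(Set.Icc (0:ℝ) 1), LebI S = 0 → lam (φ ⁻¹' S) = 0 := by
    intro S hS
    exact le_antisymm (hS ▸ lem1 S) zero_le
  set q := qtl μ with hqdef
  have hq : Measurable q := qtl_measurable hs
  set ψ : ↥(Set.Icc (0:ℝ) 1) → ↥(limT T) := fun y => Function.invFun emb (q y.1) with hψ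
  have key2 : ∀ Z : Set ℝ, MeasurableSet Z → μ Z = 0 →
      LebI ((fun y : ↥(Set.Icc (0:ℝ) 1) => q y.1) ⁻¹' Z) = 0 := by
    intro Z hZm hZ0
    have hWm : MeasurableSet ((fun y : ↥(Set.Icc (0:ℝ) 1) => q y.1) ⁻¹' Z) :=
      (hq.comp measurable_subtype_coe) hZm
    rw [key1 _ hWm]
    refine measure_mono_null (t := badSet μ ∪ Z) ?_
      (measure_union_null (badSet_null hs) hZ0)
    intro x hx
    by_cases hb : x ∈ badSet μ
    · exact Or.inl hb
    · right
      have hqc : qtl μ (ProbabilityTheory.cdf μ x) = x := qtl_cdf_of_not_mem hs hb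
      have hx' : q ((cdf' x).1) ∈ Z := hx
      rwa [show ((cdf' x).1) = ProbabilityTheory.cdf μ x from rfl, hqdef, hqc] at hx'
  have key3 : ∀ A : Set ↥(limT T), lam A = 0 → LebI (ψ ⁻¹' A) = 0 := by
    intro A hA
    have hNm : MeasurableSet (toMeasurable lam A) := measurableSet_toMeasurable _ _
    have hN0 : lam (toMeasurable lam A) = 0 := by rw [measure_toMeasurable, hA]
    set Z := (Set.range emb)ᶜ ∪ emb '' (toMeasurable lam A) with hZ
    have hZm : MeasurableSet Z :=
      hemb.measurableSet_range.compl.union (hemb.measurableSet_image' hNm)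
    have hZ0 : μ Z = 0 := by
      refine measure_union_null ?_ ?_
      · rw [hμ, hemb.map_apply]
        have : emb ⁻¹' (Set.range emb)ᶜ = ∅ := by
          ext z
          simp [Set.mem_range]
        rw [this]; exact measure_empty
      · rw [hμ, hemb.map_apply, hemb.injective.preimage_image]
        exact hN0
    refine measure_mono_null (t := (fun y : ↥(Set.Icc (0:ℝ) 1) => q y.1) ⁻¹' Z) ?_
      (key2 Z hZm hZ0)
    intro y hy
    have hyN : ψ y ∈ toMeasurable lam A := subset_toMeasurable lam A hy
    by_cases hr : q y.1 ∈ Set.range emb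
    · exact Or.inr ⟨ψ y, hyN, Function.invFun_eq hr⟩
    · exact Or.inl hr
  -- bad sets for the almost-inverse identities
  set E1 := emb ⁻¹' (badSet μ) with hE1def
  have hE10 : lam E1 = 0 := by
    have h := hemb.map_apply (μ := lam) (badSet μ)
    rw [← hμ] at h
    rw [hE1def, ← h, badSet_null hs]
  have hE1 : ∀ x : ↥(limT T), x ∉ E1 → ψ (φ x) = x := by
    intro x hx
    have h1 : qtl μ (ProbabilityTheory.cdf μ (emb x)) = emb x := qtl_cdf_of_not_mem hs hx
    show Function.invFun emb (q ((cdf' (emb x)).1)) = x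
    rw [show ((cdf' (emb x)).1) = ProbabilityTheory.cdf μ (emb x) from rfl, hqdef, h1]
    exact Function.leftInverse_invFun hemb.injective x
  set E2 : Set ↥(Set.Icc (0:ℝ) 1) :=
    (fun y : ↥(Set.Icc (0:ℝ) 1) => y.1) ⁻¹' ({0, 1} : Set ℝ) ∪
      (fun y : ↥(Set.Icc (0:ℝ) 1) => q y.1) ⁻¹' (Set.range emb)ᶜ with hE2def
  have hE20 : LebI E2 = 0 := by
    refine measure_union_null ?_ ?_
    · have hm01 : MeasurableSet ({0, 1} : Set ℝ) :=
        (measurableSet_singleton 0).union (measurableSet_singleton 1)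
      have hm : MeasurableSet ((fun y : ↥(Set.Icc (0:ℝ) 1) => y.1) ⁻¹' ({0,1} : Set ℝ)) :=
        measurable_subtype_coe hm01
      rw [key1 _ hm]
      have heq : cdf' ⁻¹' ((fun y : ↥(Set.Icc (0:ℝ) 1) => y.1) ⁻¹' ({0,1} : Set ℝ)) =
          (ProbabilityTheory.cdf μ) ⁻¹' {0} ∪ (ProbabilityTheory.cdf μ) ⁻¹' {1} := by
        ext x
        simp only [Set.mem_preimage, Set.mem_insert_iff, Set.mem_singleton_iff, Set.mem_union]
        exact Iff.rfl
      rw [heq]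
      exact measure_union_null (cdf_fiber_null hs 0) (cdf_fiber_null hs 1)
    · refine key2 _ hemb.measurableSet_range.compl ?_
      rw [hμ, hemb.map_apply]
      have : emb ⁻¹' (Set.range emb)ᶜ = ∅ := by
        ext z
        simp [Set.mem_range]
      rw [this]; exact measure_empty
  have hE2 : ∀ y, y ∉ E2 → φ (ψ y) = y := by
    intro y hy
    rw [hE2def] at hy
    simp only [Set.mem_union, Set.mem_preimage, Set.mem_insert_iff, Set.mem_singleton_iff,
      Set.mem_compl_iff, not_or] at hy
    obtain ⟨hy1, hy2⟩ := hy
    push_neg at hy1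
    rw [not_not] at hy2
    have hyIoo : y.1 ∈ Set.Ioo (0:ℝ) 1 :=
      ⟨lt_of_le_of_ne y.2.1 (Ne.symm hy1.1), lt_of_le_of_ne y.2.2 hy1.2⟩
    have h1 : emb (ψ y) = q y.1 := Function.invFun_eq hy2
    show cdf' (emb (ψ y)) = y
    rw [h1]
    refine Subtype.ext ?_
    show ProbabilityTheory.cdf μ (q y.1) = y.1
    rw [hqdef]
    exact cdf_qtl hs hyIoo
  refine ⟨?_, ?_, ?_, ?_⟩
  · -- (1)
    refine ⟨fun A => ⟨ψ ⁻¹' (toMeasurable lam A.1), (mem_nullIdeal_iff _ _).2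
        (key3 _ (by rw [measure_toMeasurable]; exact (mem_nullIdeal_iff _ _).1 A.2))⟩,
      fun B => ⟨φ ⁻¹' B.1 ∪ E1, (mem_nullIdeal_iff _ _).2
        (measure_union_null (lem1' _ ((mem_nullIdeal_iff _ _).1 B.2)) hE10)⟩, ?_⟩
    intro A B hFB x hx
    by_cases hE : x ∈ E1
    · exact Or.inr hE
    · left
      have h1 : ψ (φ x) = x := hE1 x hE
      have h2 : φ x ∈ ψ ⁻¹' (toMeasurable lam A.1) := by
        rw [Set.mem_preimage, h1]
        exact subset_toMeasurable lam A.1 hx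
      exact hFB h2
  · -- (2)
    refine ⟨fun B => ⟨φ ⁻¹' (toMeasurable LebI B.1), (mem_nullIdeal_iff _ _).2
        (lem1' _ (by rw [measure_toMeasurable]; exact (mem_nullIdeal_iff _ _).1 B.2))⟩,
      fun A => ⟨ψ ⁻¹' A.1 ∪ E2, (mem_nullIdeal_iff _ _).2
        (measure_union_null (key3 _ ((mem_nullIdeal_iff _ _).1 A.2)) hE20)⟩, ?_⟩
    intro B A hFA y hy
    by_cases hE : y ∈ E2
    · exact Or.inr hE
    · left
      have h1 : φ (ψ y) = y := hE2 y hE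
      have h2 : ψ y ∈ φ ⁻¹' (toMeasurable LebI B.1) := by
        rw [Set.mem_preimage, h1]
        exact subset_toMeasurable LebI B.1 hy
      exact hFA h2
  · -- (3)
    exact ⟨φ, fun B => ⟨φ ⁻¹' B.1, (mem_nullIdeal_iff _ _).2
      (lem1' _ ((mem_nullIdeal_iff _ _).1 B.2))⟩, fun x B hx => hx⟩
  · -- (4)
    exact ⟨ψ, fun A => ⟨ψ ⁻¹' A.1, (mem_nullIdeal_iff _ _).2
      (key3 _ ((mem_nullIdeal_iff _ _).1 A.2))⟩, fun y A hy => hy⟩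
end
end

section
/- Let X be a nonempty Polish space (separable and completely metrizable) equipped with its Borel σ-algebra, and let μ be a Borel probability measure on X with μ({x}) = 0 for every x ∈ X. Then there exists a Borel isomorphism f : X → [0,1] (a bijection such that both f and f⁻¹ are Borel measurable) such that μ(f⁻¹(B)) equals the Lebesgue measure of B for every Borel set B ⊆ [0,1]. -/
open MeasureTheory

noncomputable section

section Stmt18Aux

open MeasureTheory Set Filter Topology ProbabilityTheory

namespace Stmt18Aux

/-- Embedding of Cantor space into the ternary Cantor set. -/
def g (f : ℕ → Bool) : ℝ := 2 * Cardinal.cantorFunction (1/3) f / 3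

lemma cf_nonneg (f : ℕ → Bool) : 0 ≤ Cardinal.cantorFunction (1/3) f := by
  have h0 : Cardinal.cantorFunction (1/3 : ℝ) (fun _ => false) = 0 := by
    have : ∀ n, Cardinal.cantorFunctionAux (1/3 : ℝ) (fun _ => false) n = 0 := fun n =>
      Cardinal.cantorFunctionAux_false rfl
    simp [Cardinal.cantorFunction, this]
  calc (0:ℝ) = Cardinal.cantorFunction (1/3) (fun _ => false) := h0.symm
    _ ≤ Cardinal.cantorFunction (1/3) f := Cardinal.cantorFunction_le (by norm_num) (by norm_num) (by simp)

lemma cf_le (f : ℕ → Bool) : Cardinal.cantorFunction (1/3) f ≤ 3/2 := by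
  have h1 : Cardinal.cantorFunction (1/3 : ℝ) (fun _ => true) = 3/2 := by
    have : ∀ n, Cardinal.cantorFunctionAux (1/3 : ℝ) (fun _ => true) n = (1/3)^n := fun n =>
      Cardinal.cantorFunctionAux_true rfl
    rw [Cardinal.cantorFunction, tsum_congr this, tsum_geometric_of_lt_one (by norm_num) (by norm_num)]
    norm_num
  calc Cardinal.cantorFunction (1/3) f ≤ Cardinal.cantorFunction (1/3) (fun _ => true) :=
      Cardinal.cantorFunction_le (by norm_num) (by norm_num) (by simp)
    _ = 3/2 := h1

lemma g_mem_pre : ∀ n f, g f ∈ preCantorSet n := by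
  intro n
  induction n with
  | zero =>
    intro f
    constructor
    · have := cf_nonneg f; unfold g; linarith
    · have := cf_le f; unfold g; linarith
  | succ n ih =>
    intro f
    have hsucc := Cardinal.cantorFunction_succ f (by norm_num : (0:ℝ) ≤ 1/3) (by norm_num)
    cases hf0 : f 0 with
    | false =>
      refine Or.inl ⟨g (fun n => f (n+1)), ih _, ?_⟩
      rw [hf0] at hsucc
      simp only [cond_false] at hsucc
      unfold g; rw [hsucc]; ring
    | true =>
      refine Or.inr ⟨g (fun n => f (n+1)), ih _, ?_⟩
      rw [hf0] at hsucc
      simp only [cond_true] at hsucc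
      unfold g; rw [hsucc]; ring

lemma g_mem (f : ℕ → Bool) : g f ∈ cantorSet := Set.mem_iInter.mpr (fun n => g_mem_pre n f)

lemma g_inj : Function.Injective g := by
  intro a b hab
  apply Cardinal.cantorFunction_injective (by norm_num : (0:ℝ) < 1/3) (by norm_num)
  unfold g at hab
  linarith

lemma g_meas : Measurable g := by
  have hcf : Measurable (Cardinal.cantorFunction (1/3 : ℝ)) := by
    have hmeas : ∀ N : ℕ, Measurable (fun f : ℕ → Bool =>
        ∑ n ∈ Finset.range N, Cardinal.cantorFunctionAux (1/3 : ℝ) f n) := by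
      intro N
      apply Finset.measurable_sum
      intro n _
      have : (fun f : ℕ → Bool => Cardinal.cantorFunctionAux (1/3 : ℝ) f n)
          = (fun b : Bool => bif b then (1/3:ℝ)^n else 0) ∘ (fun f : ℕ → Bool => f n) := by
        funext f; simp [Cardinal.cantorFunctionAux]
      rw [this]
      exact (measurable_of_countable _).comp (measurable_pi_apply n)
    apply measurable_of_tendsto_metrizable hmeas
    rw [tendsto_pi_nhds]
    intro f
    exact ((Cardinal.summable_cantor_function f (by norm_num) (by norm_num)).hasSum).tendsto_sum_nat
  unfold g
  exact (hcf.const_mul 2).div_const 3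

lemma mk_funBool : Cardinal.mk (ℕ → Bool) = Cardinal.continuum := by simp

lemma notCountable_funBool : ¬ Countable (ℕ → Bool) := by
  intro h
  have h1 : Cardinal.mk (ℕ → Bool) ≤ Cardinal.aleph0 := Cardinal.mk_le_aleph0
  rw [mk_funBool] at h1
  exact absurd h1 Cardinal.aleph0_lt_continuum.not_ge

lemma volume_preCantorSet (n : ℕ) :
    volume (preCantorSet n) ≤ ENNReal.ofReal ((2/3 : ℝ)^n) := by
  induction n with
  | zero => simp [Real.volume_Icc]
  | succ n ih =>
    have key : ∀ c : ℝ, volume ((AffineMap.homothety c (1/3:ℝ)) '' preCantorSet n)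
        ≤ ENNReal.ofReal (1/3 * (2/3:ℝ)^n) := by
      intro c
      rw [Measure.addHaar_image_homothety]
      have : |((1:ℝ)/3) ^ Module.finrank ℝ ℝ| = 1/3 := by
        rw [Module.finrank_self]; norm_num
      rw [this, ENNReal.ofReal_mul (by norm_num : (0:ℝ) ≤ 1/3)]
      exact mul_le_mul_right ih _
    have e1 : (· / 3 : ℝ → ℝ) '' preCantorSet n
        = (AffineMap.homothety (0:ℝ) (1/3:ℝ)) '' preCantorSet n := by
      apply Set.image_congr'
      intro x
      simp [AffineMap.homothety_apply]
      ring
    have e2 : (fun x : ℝ => (2 + x) / 3) '' preCantorSet n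
        = (AffineMap.homothety (1:ℝ) (1/3:ℝ)) '' preCantorSet n := by
      apply Set.image_congr'
      intro x
      simp [AffineMap.homothety_apply]
      ring
    calc volume (preCantorSet (n+1))
        ≤ volume ((· / 3 : ℝ → ℝ) '' preCantorSet n)
          + volume ((fun x : ℝ => (2 + x) / 3) '' preCantorSet n) := by
          rw [preCantorSet_succ]; exact measure_union_le _ _
      _ ≤ ENNReal.ofReal (1/3 * (2/3:ℝ)^n) + ENNReal.ofReal (1/3 * (2/3:ℝ)^n) := by
          rw [e1, e2]; exact add_le_add (key 0) (key 1)
      _ = ENNReal.ofReal ((2/3:ℝ)^(n+1)) := by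
          rw [← ENNReal.ofReal_add (by positivity) (by positivity)]
          congr 1
          ring

lemma volume_cantorSet : volume cantorSet = 0 := by
  have hle : ∀ n, volume cantorSet ≤ ENNReal.ofReal ((2/3 : ℝ)^n) := fun n =>
    le_trans (measure_mono (Set.iInter_subset _ n)) (volume_preCantorSet n)
  have htend : Tendsto (fun n : ℕ => ENNReal.ofReal ((2/3 : ℝ)^n)) atTop (nhds 0) := by
    rw [show (0 : ENNReal) = ENNReal.ofReal 0 by simp]
    exact ENNReal.tendsto_ofReal
      (tendsto_pow_atTop_nhds_zero_of_lt_one (by norm_num) (by norm_num))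
  exact le_antisymm (ge_of_tendsto' htend hle) zero_le


variable (ν : Measure ℝ) [IsProbabilityMeasure ν] [NullSingletonClass ν]

lemma noJump (x : ℝ) : Function.leftLim (cdf ν) x = cdf ν x := by
  have h1 : (cdf ν).measure {x} = 0 := by rw [measure_cdf]; exact measure_singleton x
  rw [StieltjesFunction.measure_singleton] at h1
  have h2 : cdf ν x - Function.leftLim (cdf ν) x ≤ 0 := by
    by_contra h
    push_neg at h
    rw [ENNReal.ofReal_eq_zero] at h1
    linarith
  have h3 : Function.leftLim (cdf ν) x ≤ cdf ν x := (monotone_cdf ν).leftLim_le le_rfl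
  linarith

lemma attain {t : ℝ} (h0 : 0 < t) (h1 : t < 1) :
    ∃ c, cdf ν c = t ∧ {x | cdf ν x ≤ t} = Iic c := by
  set F : ℝ → ℝ := (cdf ν : ℝ → ℝ) with hF
  set S : Set ℝ := {x | F x ≤ t} with hS
  have hne : S.Nonempty := by
    have := (tendsto_cdf_atBot ν).eventually_lt_const h0
    rcases this.exists with ⟨x, hx⟩
    exact ⟨x, le_of_lt hx⟩
  have hbdd : BddAbove S := by
    have := (tendsto_cdf_atTop ν).eventually_const_lt h1
    rcases this.exists with ⟨b, hb⟩
    refine ⟨b, fun x hx => ?_⟩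
    by_contra hbx
    push_neg at hbx
    have : F b ≤ F x := monotone_cdf ν hbx.le
    have : t < F x := lt_of_lt_of_le hb this
    exact absurd hx (by simpa [hS] using this.not_ge)
  set c := sSup S with hc
  have hFc_le : F c ≤ t := by
    by_cases hmem : c ∈ S
    · exact hmem
    · -- points of S accumulate at c from the left
      have hlt : ∀ s ∈ S, s < c := fun s hs =>
        lt_of_le_of_ne (le_csSup hbdd hs) (fun h => hmem (h ▸ hs))
      have htendsto : Tendsto F (nhdsWithin c (Iio c)) (nhds (F c)) := by
        have := (monotone_cdf ν).tendsto_leftLim c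
        rwa [noJump] at this
      by_contra h
      push_neg at h
      have hev : ∀ᶠ x in nhdsWithin c (Iio c), t < F x := htendsto.eventually_const_lt h
      rw [eventually_nhdsWithin_iff] at hev
      rcases mem_nhds_iff_exists_Ioo_subset.mp hev with ⟨l, u, hclu, hsub⟩
      -- find s ∈ S with max l (c - 1) < s < c
      obtain ⟨s, hsS, hls⟩ := exists_lt_of_lt_csSup hne
        (show max l (c-1) < c by
          rcases hclu with ⟨hl, hu⟩
          exact max_lt hl (by linarith))
      have hsc : s < c := hlt s hsS
      have : t < F s := hsub ⟨lt_of_le_of_lt (le_max_left _ _) hls,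
        lt_of_lt_of_le hsc (le_of_lt hclu.2)⟩ hsc
      exact absurd hsS (by simpa [hS] using this.not_ge)
  have hFc_ge : t ≤ F c := by
    have hright : Tendsto F (nhdsWithin c (Ioi c)) (nhds (F c)) := by
      have := ((cdf ν).right_continuous c).tendsto
      exact this.mono_left (nhdsWithin_mono c Ioi_subset_Ici_self)
    refine ge_of_tendsto hright ?_
    filter_upwards [self_mem_nhdsWithin] with x hx
    have hxS : x ∉ S := fun hmem => (le_csSup hbdd hmem).not_gt hx
    simp only [hS, mem_setOf_eq, not_le] at hxS
    exact hxS.le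
  have hFc : F c = t := le_antisymm hFc_le hFc_ge
  refine ⟨c, hFc, ?_⟩
  ext x
  simp only [hS, mem_setOf_eq, mem_Iic]
  constructor
  · intro hx; exact le_csSup hbdd hx
  · intro hx; calc F x ≤ F c := monotone_cdf ν hx
      _ = t := hFc

lemma measure_le_zero : ν {x | cdf ν x ≤ 0} = 0 := by
  by_contra h
  have hlt : (0 : ENNReal) < ν {x | cdf ν x ≤ 0} := pos_iff_ne_zero.mpr h
  set ε := ν {x | cdf ν x ≤ 0} with hε
  have hfin : ε ≠ ⊤ := measure_ne_top ν _
  set r : ℝ := min (ε.toReal / 2) (1/2) with hr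
  have hr0 : 0 < r := by
    apply lt_min
    · exact half_pos (ENNReal.toReal_pos (pos_iff_ne_zero.mp hlt) hfin)
    · norm_num
  have hr1 : r < 1 := lt_of_le_of_lt (min_le_right _ _) (by norm_num)
  obtain ⟨c, hc, hSc⟩ := attain ν hr0 hr1
  have hsub : {x | cdf ν x ≤ 0} ⊆ Iic c := by
    rw [← hSc]; exact fun x hx => le_trans hx hr0.le
  have : ε ≤ ENNReal.ofReal r := by
    calc ε ≤ ν (Iic c) := measure_mono hsub
      _ = ENNReal.ofReal (cdf ν c) := (ofReal_cdf ν c).symm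
      _ = ENNReal.ofReal r := by rw [hc]
  have hcontra : ENNReal.ofReal r < ε := by
    calc ENNReal.ofReal r ≤ ENNReal.ofReal (ε.toReal / 2) :=
        ENNReal.ofReal_le_ofReal (min_le_left _ _)
      _ = ε / 2 := by
        rw [ENNReal.ofReal_div_of_pos (by norm_num), ENNReal.ofReal_toReal hfin]
        norm_num
      _ < ε := ENNReal.half_lt_self (pos_iff_ne_zero.mp hlt) hfin
  exact absurd this hcontra.not_ge

lemma map_cdf : Measure.map (cdf ν) ν = volume.restrict (Icc (0:ℝ) 1) := by
  have hmeas : Measurable (cdf ν : ℝ → ℝ) := (monotone_cdf ν).measurable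
  haveI : IsProbabilityMeasure (Measure.map (cdf ν : ℝ → ℝ) ν) :=
    Measure.isProbabilityMeasure_map hmeas.aemeasurable
  apply Measure.ext_of_Iic
  intro t
  rw [Measure.map_apply hmeas measurableSet_Iic]
  have hpre : (cdf ν : ℝ → ℝ) ⁻¹' Iic t = {x | cdf ν x ≤ t} := rfl
  rw [hpre]
  rcases lt_or_ge t 0 with ht | ht
  · -- t < 0 : empty
    have : {x | cdf ν x ≤ t} = ∅ := by
      ext x; simp only [mem_setOf_eq, mem_empty_iff_false, iff_false, not_le]
      exact lt_of_lt_of_le ht (cdf_nonneg ν x)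
    rw [this, Measure.restrict_apply measurableSet_Iic]
    have : Iic t ∩ Icc (0:ℝ) 1 = ∅ := by
      ext x; simp only [mem_inter_iff, mem_Iic, mem_Icc, mem_empty_iff_false, iff_false]
      rintro ⟨h1, h2, -⟩; linarith
    simp [this]
  rcases eq_or_lt_of_le ht with ht0 | ht0
  · -- t = 0
    rw [Measure.restrict_apply measurableSet_Iic, ← ht0]
    have : Iic (0:ℝ) ∩ Icc 0 1 = {0} := by
      ext x; simp only [mem_inter_iff, mem_Iic, mem_Icc, mem_singleton_iff]
      constructor
      · rintro ⟨h1, h2, -⟩; linarith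
      · rintro rfl; norm_num
    rw [this, measure_le_zero]
    simp
  rcases lt_or_ge t 1 with ht1 | ht1
  · -- 0 < t < 1
    obtain ⟨c, hc, hSc⟩ := attain ν ht0 ht1
    rw [hSc, ← ofReal_cdf ν c, hc, Measure.restrict_apply measurableSet_Iic]
    have : Iic t ∩ Icc (0:ℝ) 1 = Icc 0 t := by
      ext x; simp only [mem_inter_iff, mem_Iic, mem_Icc]
      constructor
      · rintro ⟨h1, h2, h3⟩; exact ⟨h2, h1⟩
      · rintro ⟨h1, h2⟩; exact ⟨h2, h1, by linarith⟩
    rw [this, Real.volume_Icc]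
    norm_num
  · -- t ≥ 1
    have : {x | cdf ν x ≤ t} = univ := by
      ext x; simp only [mem_setOf_eq, mem_univ, iff_true]
      exact le_trans (cdf_le_one ν x) ht1
    rw [this, Measure.restrict_apply measurableSet_Iic]
    have h2 : Iic t ∩ Icc (0:ℝ) 1 = Icc 0 1 := by
      ext x; simp only [mem_inter_iff, mem_Iic, mem_Icc]
      constructor
      · rintro ⟨h1, h2, h3⟩; exact ⟨h2, h3⟩
      · rintro ⟨h1, h2⟩; exact ⟨by linarith, h1, h2⟩
    rw [h2, Real.volume_Icc, measure_univ]
    norm_num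


end Stmt18Aux

end Stmt18Aux

open Set Filter Topology ProbabilityTheory Stmt18Aux in
theorem stmt18 (X : Type*) [TopologicalSpace X] [PolishSpace X]
    [MeasurableSpace X] [BorelSpace X] [Nonempty X]
    (μ : Measure X) (hμ : IsProbabilityMeasure μ)
    (hfree : ∀ x : X, μ {x} = 0) :
    ∃ e : X ≃ᵐ ↥(Set.Icc (0 : ℝ) 1),
      ∀ B : Set ↥(Set.Icc (0 : ℝ) 1), MeasurableSet B → μ (e ⁻¹' B) = LebI B := by
  classical
  haveI : NullSingletonClass μ := ⟨hfree⟩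
  have hXnc : ¬ Countable X := by
    intro h
    have h0 : μ (univ : Set X) = 0 := Set.countable_univ.measure_zero μ
    rw [measure_univ] at h0
    exact one_ne_zero h0
  have hRnc : ¬ Countable ℝ := fun _ => Cardinal.not_countable_real Set.countable_univ
  let e₀ : X ≃ᵐ ℝ := PolishSpace.measurableEquivOfNotCountable hXnc hRnc
  set ν : Measure ℝ := Measure.map e₀ μ with hν
  haveI : IsProbabilityMeasure ν := Measure.isProbabilityMeasure_map e₀.measurable.aemeasurable
  haveI : NullSingletonClass ν := by
    constructor
    intro x
    rw [hν, Measure.map_apply e₀.measurable (measurableSet_singleton x)]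
    have hpre : e₀ ⁻¹' {x} = {e₀.symm x} := by
      ext y
      simp only [mem_preimage, mem_singleton_iff]
      constructor
      · intro hy; rw [← hy]; exact (e₀.symm_apply_apply y).symm
      · intro hy; rw [hy]; exact e₀.apply_symm_apply x
    rw [hpre]
    exact hfree _
  set F : ℝ → ℝ := (cdf ν : ℝ → ℝ) with hFdef
  have hFmono : Monotone F := monotone_cdf ν
  have hFmeas : Measurable F := hFmono.measurable
  have hmap : Measure.map F ν = volume.restrict (Icc 0 1) := map_cdf ν
  have hpush : ∀ S : Set ℝ, MeasurableSet S → ν (F ⁻¹' S) = volume (S ∩ Icc 0 1) := by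
    intro S hS
    rw [← Measure.map_apply hFmeas hS, hmap, Measure.restrict_apply hS]
  -- non-injectivity value set
  set V : Set ℝ := {t | ∃ a b, a < b ∧ F a = t ∧ F b = t} with hVdef
  have hVcnt : V.Countable := by
    apply Set.Countable.mono ?_ ((Set.countable_range ((↑) : ℚ → ℝ)).image F)
    rintro t ⟨a, b, hab, ha, hb⟩
    obtain ⟨q, hq1, hq2⟩ := exists_rat_btwn hab
    refine ⟨(q : ℝ), ⟨q, rfl⟩, ?_⟩
    have h1 : F a ≤ F (q : ℝ) := hFmono hq1.le
    have h2 : F (q : ℝ) ≤ F b := hFmono hq2.le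
    rw [ha] at h1; rw [hb] at h2
    exact le_antisymm h2 h1
  -- Cantor null uncountable set
  have hgemb : MeasurableEmbedding g := g_meas.measurableEmbedding g_inj
  set K : Set ℝ := Set.range g with hKdef
  have hKmeas : MeasurableSet K := hgemb.measurableSet_range
  have hKsub : K ⊆ cantorSet := by rintro _ ⟨f, rfl⟩; exact g_mem f
  have hKsub' : K ⊆ Icc 0 1 := fun x hx => cantorSet_subset_unitInterval (hKsub hx)
  have hKnc : ¬ K.Countable := by
    intro h
    haveI : Countable ↥K := Set.countable_coe_iff.mpr h
    exact notCountable_funBool (Countable.of_equiv _ (Equiv.ofInjective g g_inj).symm)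
  have hKvol : volume K = 0 := measure_mono_null hKsub volume_cantorSet
  -- the bad set W and the good set A
  set W : Set ℝ := F ⁻¹' (V ∪ K) with hWdef
  have hVKmeas : MeasurableSet (V ∪ K) := hVcnt.measurableSet.union hKmeas
  have hWmeas : MeasurableSet W := hFmeas hVKmeas
  have hWnull : ν W = 0 := by
    rw [hWdef, hpush _ hVKmeas]
    exact measure_mono_null inter_subset_left
      (measure_union_null (hVcnt.measure_zero _) hKvol)
  set A : Set ℝ := Wᶜ with hAdef
  have hAmeas : MeasurableSet A := hWmeas.compl
  have hFinjA : ∀ x ∈ A, ∀ y ∈ A, F x = F y → x = y := by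
    intro x hx y hy hxy
    by_contra hne
    rcases lt_or_gt_of_ne hne with h | h
    · exact hx (show F x ∈ V ∪ K from Or.inl ⟨x, y, h, rfl, hxy.symm⟩)
    · exact hx (show F x ∈ V ∪ K from Or.inl ⟨y, x, h, hxy.symm, rfl⟩)
  -- the unit interval as a standard Borel space
  haveI hIpolish : PolishSpace ↥(Icc (0:ℝ) 1) := (isClosed_Icc (a := (0:ℝ)) (b := 1)).polishSpace
  have hFmem : ∀ x, F x ∈ Icc (0:ℝ) 1 := fun x => ⟨cdf_nonneg ν x, cdf_le_one ν x⟩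
  set Ftil : ℝ → ↥(Icc (0:ℝ) 1) := fun x => ⟨F x, hFmem x⟩ with hFtildef
  have hFtilmeas : Measurable Ftil := hFmeas.subtype_mk
  -- m : A → I  measurable embedding
  set m : ↥A → ↥(Icc (0:ℝ) 1) := fun a => Ftil a.1 with hmdef
  have hminj : Function.Injective m := by
    intro a b hab
    apply Subtype.ext
    apply hFinjA _ a.2 _ b.2
    exact congrArg Subtype.val hab
  haveI : StandardBorelSpace ↥A := hAmeas.standardBorel
  have hmmeas : Measurable m := hFtilmeas.comp measurable_subtype_coe
  have hmemb : MeasurableEmbedding m := hmmeas.measurableEmbedding hminj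
  set B : Set ↥(Icc (0:ℝ) 1) := Set.range m with hBdef
  have hBmeas : MeasurableSet B := hmemb.measurableSet_range
  let φ : ↥A ≃ᵐ ↥B := hmemb.equivRange
  have hφval : ∀ a : ↥A, ((φ a : ↥B) : ↥(Icc (0:ℝ) 1)) = Ftil a.1 := by
    intro a
    show ((hmemb.equivRange a : ↥B) : ↥(Icc (0:ℝ) 1)) = m a
    simp [MeasurableEmbedding.equivRange, MeasurableEmbedding.equivImage, MeasurableEquiv.cast,
      MeasurableEquiv.trans, MeasurableEquiv.Set.univ]
    rfl
  -- K' : uncountable part of K avoiding bad values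
  set K' : Set ℝ := K \ ({0, 1} ∪ V) with hK'def
  have hK'nc : ¬ K'.Countable := by
    intro h
    apply hKnc
    have : K ⊆ K' ∪ ({0, 1} ∪ V) := by
      intro x hx
      by_cases hmem : x ∈ ({0, 1} ∪ V : Set ℝ)
      · exact Or.inr hmem
      · exact Or.inl ⟨hx, hmem⟩
    exact (h.union (((Set.finite_singleton (1:ℝ)).insert 0).countable.union hVcnt)).mono this
  have hK'surj : ∀ t ∈ K', ∃ x ∈ W, F x = t := by
    intro t ht
    have htI : t ∈ Icc (0:ℝ) 1 := hKsub' ht.1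
    have ht0 : t ≠ 0 := fun h => ht.2 (Or.inl (by simp [h]))
    have ht1 : t ≠ 1 := fun h => ht.2 (Or.inl (by simp [h]))
    obtain ⟨c, hc, -⟩ := attain ν (lt_of_le_of_ne htI.1 (Ne.symm ht0))
      (lt_of_le_of_ne htI.2 ht1)
    have hc' : F c = t := hc
    refine ⟨c, ?_, hc'⟩
    show F c ∈ V ∪ K
    rw [hc']
    exact Or.inr ht.1
  -- complements are uncountable
  have hAcnc : ¬ Countable ↥(Aᶜ) := by
    rw [Set.countable_coe_iff]
    intro h
    have hWc : W.Countable := by rwa [hAdef, compl_compl] at h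
    apply hK'nc
    apply Set.Countable.mono ?_ (hWc.image F)
    intro t ht
    obtain ⟨x, hxW, hxt⟩ := hK'surj t ht
    exact ⟨x, hxW, hxt⟩
  have hBcnc : ¬ Countable ↥(Bᶜ) := by
    rw [Set.countable_coe_iff]
    intro h
    apply hK'nc
    apply Set.Countable.mono ?_ (h.image (Subtype.val))
    intro t ht
    have htI : t ∈ Icc (0:ℝ) 1 := hKsub' ht.1
    refine ⟨⟨t, htI⟩, ?_, rfl⟩
    intro hmem
    obtain ⟨a, ha⟩ := hmem
    have hFa : F a.1 = t := congrArg Subtype.val ha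
    have : a.1 ∈ W := by
      show F a.1 ∈ V ∪ K
      rw [hFa]
      exact Or.inr ht.1
    exact a.2 this
  haveI : StandardBorelSpace ↥(Aᶜ) := hAmeas.compl.standardBorel
  haveI : StandardBorelSpace ↥(Bᶜ) := hBmeas.compl.standardBorel
  let ψ : ↥(Aᶜ) ≃ᵐ ↥(Bᶜ) := PolishSpace.measurableEquivOfNotCountable hAcnc hBcnc
  let h : ℝ ≃ᵐ ↥(Icc (0:ℝ) 1) :=
    (MeasurableEquiv.sumCompl hAmeas).symm.trans
      ((φ.sumCongr ψ).trans (MeasurableEquiv.sumCompl hBmeas))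
  have hhA : ∀ x (hx : x ∈ A), h x = Ftil x := by
    intro x hx
    have e1 : (MeasurableEquiv.sumCompl hAmeas).symm x = Sum.inl ⟨x, hx⟩ := by
      show (Equiv.sumCompl (· ∈ A)).symm x = Sum.inl ⟨x, hx⟩
      exact Equiv.sumCompl_symm_apply_of_pos hx
    show (MeasurableEquiv.sumCompl hBmeas) ((φ.sumCongr ψ) ((MeasurableEquiv.sumCompl hAmeas).symm x)) = Ftil x
    rw [e1]
    have e2 : (φ.sumCongr ψ) (Sum.inl ⟨x, hx⟩) = Sum.inl (φ ⟨x, hx⟩) := rfl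
    rw [e2]
    have e3 : (MeasurableEquiv.sumCompl hBmeas) (Sum.inl (φ ⟨x, hx⟩)) = ((φ ⟨x, hx⟩ : ↥B) : ↥(Icc (0:ℝ) 1)) := rfl
    rw [e3, hφval ⟨x, hx⟩]
  refine ⟨e₀.trans h, ?_⟩
  intro B' hB'
  have hvalemb : MeasurableEmbedding ((↑) : ↥(Icc (0:ℝ) 1) → ℝ) :=
    MeasurableEmbedding.subtype_coe measurableSet_Icc
  have hBval : MeasurableSet (Subtype.val '' B') := hvalemb.measurableSet_image.mpr hB'
  have h1 : μ ((e₀.trans h) ⁻¹' B') = ν (h ⁻¹' B') := by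
    rw [hν, Measure.map_apply e₀.measurable (h.measurable hB')]
    rfl
  have hFtilpre : Ftil ⁻¹' B' = F ⁻¹' (Subtype.val '' B') := by
    ext x
    simp only [mem_preimage]
    constructor
    · intro hx; exact ⟨Ftil x, hx, rfl⟩
    · rintro ⟨b, hb, hbe⟩
      have : Ftil x = b := Subtype.ext hbe.symm
      rwa [this]
  have hvol : ν (Ftil ⁻¹' B') = volume (Subtype.val '' B') := by
    rw [hFtilpre, hpush _ hBval]
    congr 1
    rw [inter_eq_left]
    rintro y ⟨b, _, hbe⟩
    rw [← hbe]
    exact b.2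
  have hsplit : ν (h ⁻¹' B' ∩ A) + ν (h ⁻¹' B' \ A) = ν (h ⁻¹' B') :=
    measure_inter_add_diff _ hAmeas
  have hnull2 : ν (h ⁻¹' B' \ A) = 0 := by
    apply measure_mono_null _ hWnull
    intro x hx
    exact Set.notMem_compl_iff.mp hx.2
  have hinter : h ⁻¹' B' ∩ A = Ftil ⁻¹' B' ∩ A := by
    ext x
    simp only [mem_inter_iff, mem_preimage]
    constructor
    · rintro ⟨hx1, hx2⟩; rw [← hhA x hx2]; exact ⟨hx1, hx2⟩
    · rintro ⟨hx1, hx2⟩; rw [hhA x hx2]; exact ⟨hx1, hx2⟩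
  have hnull3 : ν (Ftil ⁻¹' B' \ A) = 0 := by
    apply measure_mono_null _ hWnull
    intro x hx
    exact Set.notMem_compl_iff.mp hx.2
  have hsplit2 : ν (Ftil ⁻¹' B' ∩ A) + ν (Ftil ⁻¹' B' \ A) = ν (Ftil ⁻¹' B') :=
    measure_inter_add_diff _ hAmeas
  have hmain : ν (h ⁻¹' B') = volume (Subtype.val '' B') := by
    rw [← hsplit, hnull2, add_zero, hinter]
    rw [hnull3, add_zero] at hsplit2
    rw [hsplit2, hvol]
  have hLeb : LebI B' = volume (Subtype.val '' B') := by
    rw [LebI, hvalemb.comap_apply]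
  rw [h1, hmain, hLeb]
end
end
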